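/- arXiv:1808.07339 — 2 statements merged into one kernel-verified Lean document; each statement's English description precedes it below -/
import Mathlib

section
/- A risk measure ρ on bounded random variables is monetary, comonotonic-additive and Q-based (for Q = {Q1,...,Qn}) if and only if ρ(X) = ∫ X d(ψ∘Q̲) for some function ψ: [0,1]^n → [0,1] such that the set function A ↦ ψ(Q1(A),...,Qn(A)) is standard (increasing, 0 at ∅, 1 at Ω). -/
open MeasureTheory Set

noncomputable def choquet {Ω : Type*} (c : Set Ω → ℝ) (X : Ω → ℝ) : ℝ :=
  (∫ x in Set.Iio (0 : ℝ), (c {ω | x < X ω} - 1)) + ∫ x in Set.Ioi (0 : ℝ), c {ω | x < X ω}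

def Comonotonic {Ω : Type*} (X Y : Ω → ℝ) : Prop :=
  ∀ ω ω', 0 ≤ (X ω - X ω') * (Y ω - Y ω')

def BddRV {Ω : Type*} (X : Ω → ℝ) : Prop := ∃ M, ∀ ω, |X ω| ≤ M

set_option maxHeartbeats 1000000 in
structure SurvGood (g : ℝ → ℝ) (M : ℝ) : Prop where
  anti : Antitone g
  nonneg : ∀ x, 0 ≤ g x
  le_one : ∀ x, g x ≤ 1
  one_of : ∀ x, x ≤ -M → g x = 1
  zero_of : ∀ x, M ≤ x → g x = 0
  Mpos : 0 < M

noncomputable def qf (g : ℝ → ℝ) (M p : ℝ) : ℝ := sSup ({x | p < g x} ∪ Iic (-M))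

lemma SurvGood.bddAboveS {g : ℝ → ℝ} {M : ℝ} (h : SurvGood g M) {p : ℝ} (hp : 0 ≤ p) :
    ({x | p < g x} ∪ Iic (-M)) ⊆ Iic M := by
  rintro x (hx | hx)
  · simp only [mem_Iic]
    by_contra hxM
    push_neg at hxM
    rw [mem_setOf_eq, h.zero_of x hxM.le] at hx
    exact absurd hx (not_lt.mpr hp)
  · simp only [mem_Iic] at hx ⊢
    linarith [h.Mpos]

lemma SurvGood.qf_eq {g : ℝ → ℝ} {M : ℝ} (h : SurvGood g M) {p : ℝ} (hp : p < 1) :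
    qf g M p = sSup {x | p < g x} := by
  unfold qf
  rw [union_eq_left.mpr]
  intro x hx
  simp only [mem_setOf_eq]
  rw [h.one_of x hx]
  exact hp

lemma SurvGood.S_nonempty {g : ℝ → ℝ} {M : ℝ} (h : SurvGood g M) {p : ℝ} (hp : p < 1) :
    {x | p < g x}.Nonempty :=
  ⟨-M, by simp only [mem_setOf_eq]; rw [h.one_of _ le_rfl]; exact hp⟩

lemma SurvGood.S_bdd {g : ℝ → ℝ} {M : ℝ} (h : SurvGood g M) {p : ℝ} (hp : 0 ≤ p) :
    BddAbove {x | p < g x} :=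
  ⟨M, fun x hx => h.bddAboveS hp (Or.inl hx)⟩

lemma SurvGood.qf_le {g : ℝ → ℝ} {M : ℝ} (h : SurvGood g M) {p : ℝ} (hp0 : 0 ≤ p) (hp1 : p < 1) :
    qf g M p ≤ M := by
  rw [h.qf_eq hp1]
  exact csSup_le (h.S_nonempty hp1) (fun x hx => h.bddAboveS hp0 (Or.inl hx))

lemma SurvGood.le_qf {g : ℝ → ℝ} {M : ℝ} (h : SurvGood g M) {p : ℝ} (hp0 : 0 ≤ p) (hp1 : p < 1) :
    -M ≤ qf g M p := by
  rw [h.qf_eq hp1]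
  exact le_csSup (h.S_bdd hp0) (by simp only [mem_setOf_eq]; rw [h.one_of _ le_rfl]; exact hp1)

lemma SurvGood.g_le_of_qf_lt {g : ℝ → ℝ} {M : ℝ} (h : SurvGood g M) {p x : ℝ}
    (hp0 : 0 ≤ p) (hp1 : p < 1) (hx : qf g M p < x) : g x ≤ p := by
  by_contra hc
  push_neg at hc
  have : x ≤ qf g M p := by
    rw [h.qf_eq hp1]
    exact le_csSup (h.S_bdd hp0) hc
  linarith

lemma SurvGood.qf_antitoneOn {g : ℝ → ℝ} {M : ℝ} (h : SurvGood g M) :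
    AntitoneOn (qf g M) (Icc 0 1) := by
  intro p hp p' hp' hpp
  refine csSup_le_csSup ⟨M, h.bddAboveS hp.1⟩ ⟨-M, Or.inr (mem_Iic.mpr le_rfl)⟩ ?_
  rintro x (hx | hx)
  · exact Or.inl (lt_of_le_of_lt hpp hx)
  · exact Or.inr hx

lemma SurvGood.qf_intInt {g : ℝ → ℝ} {M : ℝ} (h : SurvGood g M) :
    IntervalIntegrable (qf g M) volume 0 1 := by
  have h2 := h.qf_antitoneOn
  rw [← uIcc_of_le (zero_le_one (α := ℝ))] at h2
  exact h2.intervalIntegrable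

lemma NF1 {g : ℝ → ℝ} {M : ℝ} (h : SurvGood g M) :
    ((∫ x in Iio (0:ℝ), (g x - 1)) + ∫ x in Ioi (0:ℝ), g x)
      = (∫ x in (-M)..M, g x) - M := by
  have hM : (0:ℝ) < M := h.Mpos
  have hint : ∀ a b : ℝ, IntervalIntegrable g volume a b := fun a b => h.anti.intervalIntegrable
  have hIio : Iio (0:ℝ) = Iic (-M) ∪ Ioo (-M) 0 := by
    ext x; simp only [mem_Iio, mem_union, mem_Iic, mem_Ioo]
    constructor
    · intro hx
      by_cases hxM : x ≤ -M
      · exact Or.inl hxM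
      · exact Or.inr ⟨lt_of_not_ge hxM, hx⟩
    · rintro (hx | ⟨_, hx⟩) <;> linarith
  have hIoi : Ioi (0:ℝ) = Ioo 0 M ∪ Ici M := by
    ext x; simp only [mem_Ioi, mem_union, mem_Ici, mem_Ioo]
    constructor
    · intro hx
      by_cases hxM : M ≤ x
      exacts [Or.inr hxM, Or.inl ⟨hx, lt_of_not_ge hxM⟩]
    · rintro (⟨hx, _⟩ | hx) <;> linarith
  have hgIoo1 : IntegrableOn g (Ioo (-M) 0) volume := ((hint (-M) 0).1).mono_set Ioo_subset_Ioc_self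
  have hgIoo2 : IntegrableOn g (Ioo 0 M) volume := ((hint 0 M).1).mono_set Ioo_subset_Ioc_self
  have hi1 : IntegrableOn (fun x => g x - 1) (Iic (-M)) volume :=
    (integrableOn_zero.congr_fun (fun x hx => by rw [h.one_of x hx]; ring) measurableSet_Iic)
  have hi2 : IntegrableOn (fun x => g x - 1) (Ioo (-M) 0) volume :=
    hgIoo1.sub (integrableOn_const measure_Ioo_lt_top.ne)
  have hi3 : IntegrableOn g (Ici M) volume :=
    (integrableOn_zero.congr_fun (fun x hx => (h.zero_of x hx).symm) measurableSet_Ici)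
  have d1 : Disjoint (Iic (-M)) (Ioo (-M) 0) := by
    rw [Set.disjoint_left]
    rintro x hx ⟨h1, _⟩
    exact absurd hx (not_le.mpr h1)
  have d2 : Disjoint (Ioo (0:ℝ) M) (Ici M) := by
    rw [Set.disjoint_left]
    rintro x ⟨_, h1⟩ hx
    exact absurd hx (not_le.mpr h1)
  have e1 : (∫ x in Iio (0:ℝ), (g x - 1))
      = (∫ x in Ioo (-M) 0, g x) - M := by
    rw [hIio, setIntegral_union d1 measurableSet_Ioo hi1 hi2]
    have z1 : (∫ x in Iic (-M), (g x - 1)) = 0 := by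
      rw [setIntegral_congr_fun (g := fun _ => (0:ℝ)) measurableSet_Iic
        (fun x hx => by rw [h.one_of x hx]; ring)]
      exact integral_zero _ _
    have z2 : (∫ x in Ioo (-M) 0, (g x - 1))
        = (∫ x in Ioo (-M) 0, g x) - ∫ x in Ioo (-M) 0, (1:ℝ) := by
      exact integral_sub hgIoo1 (integrableOn_const measure_Ioo_lt_top.ne)
    have z3 : (∫ x in Ioo (-M) 0, (1:ℝ)) = M := by
      simp [Real.volume_Ioo]
      linarith
    rw [z1, z2, z3]; ring
  have e2 : (∫ x in Ioi (0:ℝ), g x) = ∫ x in Ioo 0 M, g x := by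
    rw [hIoi, setIntegral_union d2 measurableSet_Ici hgIoo2 hi3]
    have z1 : (∫ x in Ici M, g x) = 0 := by
      rw [setIntegral_congr_fun (g := fun _ => (0:ℝ)) measurableSet_Ici
        (fun x hx => h.zero_of x hx)]
      exact integral_zero _ _
    rw [z1, add_zero]
  have e3 : (∫ x in Ioo (-M) 0, g x) = ∫ x in (-M)..(0:ℝ), g x := by
    rw [intervalIntegral.integral_of_le (by linarith), integral_Ioc_eq_integral_Ioo]
  have e4 : (∫ x in Ioo (0:ℝ) M, g x) = ∫ x in (0:ℝ)..M, g x := by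
    rw [intervalIntegral.integral_of_le (by linarith), integral_Ioc_eq_integral_Ioo]
  rw [e1, e2, e3, e4]
  rw [show ((∫ x in (-M)..(0:ℝ), g x) - M + ∫ x in (0:ℝ)..M, g x)
      = ((∫ x in (-M)..(0:ℝ), g x) + ∫ x in (0:ℝ)..M, g x) - M by ring]
  rw [intervalIntegral.integral_add_adjacent_intervals (hint (-M) 0) (hint 0 M)]

lemma NF2 (h : SurvGood g M) :
    (∫ x in (-M)..M, g x) = (∫ p in (0:ℝ)..1, qf g M p) + M := by
  have hM : (0:ℝ) < M := h.Mpos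
  have hInt : IntegrableOn g (Ioc (-M) M) volume := (h.anti.intervalIntegrable (a := -M) (b := M)).1
  have hS_lower : ∀ t : ℝ, IsLowerSet {a : ℝ | t < g a} :=
    fun t x y hyx hx => lt_of_lt_of_le hx (h.anti hyx)
  have hS_meas : ∀ t : ℝ, MeasurableSet {a : ℝ | t < g a} :=
    fun t => ((hS_lower t).ordConnected).measurableSet
  have key := Integrable.integral_eq_integral_meas_lt hInt
    (Filter.Eventually.of_forall (fun x => h.nonneg x))
  -- compute the measure for each t > 0
  have hmeas_eq : ∀ t ∈ Ioi (0:ℝ),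
      ((volume.restrict (Ioc (-M) M)) {a : ℝ | t < g a}).toReal
        = (Ioo (0:ℝ) 1).indicator (fun p => qf g M p + M) t := by
    intro t ht
    rw [Measure.restrict_apply (hS_meas t)]
    by_cases ht1 : t < 1
    · have htI : t ∈ Ioo (0:ℝ) 1 := ⟨ht, ht1⟩
      rw [indicator_of_mem htI]
      set q := qf g M t with hq
      have hq_eq : q = sSup {a : ℝ | t < g a} := h.qf_eq ht1
      have hqM : q ≤ M := h.qf_le (le_of_lt ht) ht1
      have hqm : -M ≤ q := h.le_qf (le_of_lt ht) ht1
      have hvol : volume ({a : ℝ | t < g a} ∩ Ioc (-M) M) = ENNReal.ofReal (q + M) := by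
        apply le_antisymm
        · have hsub : {a : ℝ | t < g a} ∩ Ioc (-M) M ⊆ Ioc (-M) q := by
            rintro x ⟨hx1, hx2, _⟩
            refine ⟨hx2, ?_⟩
            rw [hq_eq]
            exact le_csSup (h.S_bdd (le_of_lt ht)) hx1
          calc volume ({a : ℝ | t < g a} ∩ Ioc (-M) M) ≤ volume (Ioc (-M) q) := measure_mono hsub
          _ = ENNReal.ofReal (q + M) := by rw [Real.volume_Ioc]; ring_nf
        · have hsub : Ioo (-M) q ⊆ {a : ℝ | t < g a} ∩ Ioc (-M) M := by
            rintro x ⟨hx1, hx2⟩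
            have hxS : x ∈ {a : ℝ | t < g a} := by
              rw [hq_eq] at hx2
              obtain ⟨s, hs, hxs⟩ := exists_lt_of_lt_csSup (h.S_nonempty ht1) hx2
              exact (hS_lower t) (le_of_lt hxs) hs
            exact ⟨hxS, hx1, le_trans (le_of_lt hx2) hqM⟩
          calc ENNReal.ofReal (q + M) = volume (Ioo (-M) q) := by rw [Real.volume_Ioo]; ring_nf
          _ ≤ volume ({a : ℝ | t < g a} ∩ Ioc (-M) M) := measure_mono hsub
      rw [hvol, ENNReal.toReal_ofReal (by linarith)]
    · push_neg at ht1
      have hempty : {a : ℝ | t < g a} = ∅ := by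
        ext x
        simp only [mem_setOf_eq, mem_empty_iff_false, iff_false, not_lt]
        exact le_trans (h.le_one x) ht1
      rw [indicator_of_notMem (by simp [ht1, not_lt] : t ∉ Ioo (0:ℝ) 1)]
      rw [hempty]
      simp
  simp only [measureReal_def] at key
  rw [setIntegral_congr_fun measurableSet_Ioi hmeas_eq] at key
  rw [setIntegral_indicator measurableSet_Ioo] at key
  rw [show Ioi (0:ℝ) ∩ Ioo 0 1 = Ioo 0 1 from inter_eq_right.mpr (fun x hx => hx.1)] at key
  have hqint : IntegrableOn (qf g M) (Ioo (0:ℝ) 1) volume :=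
    (h.qf_intInt).1.mono_set Ioo_subset_Ioc_self
  have hsplit : (∫ p in Ioo (0:ℝ) 1, (qf g M p + M))
      = (∫ p in Ioo (0:ℝ) 1, qf g M p) + M := by
    rw [integral_add hqint (integrableOn_const measure_Ioo_lt_top.ne)]
    congr 1
    simp [Real.volume_Ioo]
  rw [hsplit] at key
  rw [intervalIntegral.integral_of_le (by linarith : -M ≤ M), key,
    intervalIntegral.integral_of_le (zero_le_one), integral_Ioc_eq_integral_Ioo]

section Cap
variable {Ω : Type*} [MeasurableSpace Ω] {c : Set Ω → ℝ}

structure CapGood (c : Set Ω → ℝ) : Prop where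
  nonneg : ∀ A, 0 ≤ c A
  le_one : ∀ A, c A ≤ 1
  empty : c ∅ = 0
  univ : c univ = 1
  mono : ∀ A B : Set Ω, MeasurableSet A → MeasurableSet B → A ⊆ B → c A ≤ c B

lemma mono_M {g : ℝ → ℝ} {M M' : ℝ} (h : SurvGood g M) (hMM : M ≤ M') : SurvGood g M' where
  anti := h.anti
  nonneg := h.nonneg
  le_one := h.le_one
  one_of := fun x hx => h.one_of x (by linarith)
  zero_of := fun x hx => h.zero_of x (by linarith)
  Mpos := lt_of_lt_of_le h.Mpos hMM

lemma surv_of (hc : CapGood c) {X : Ω → ℝ} (hX : Measurable X) {M₀ : ℝ}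
    (hb : ∀ ω, |X ω| ≤ M₀) (h0 : 0 ≤ M₀) :
    SurvGood (fun x => c {ω | x < X ω}) (M₀ + 1) where
  anti := fun x y hxy => hc.mono _ _ (measurableSet_lt measurable_const hX)
    (measurableSet_lt measurable_const hX) (fun ω hω => lt_of_le_of_lt hxy hω)
  nonneg := fun x => hc.nonneg _
  le_one := fun x => hc.le_one _
  one_of := fun x hx => by
    have : {ω | x < X ω} = univ := by
      apply eq_univ_iff_forall.mpr
      intro ω
      have := abs_le.mp (hb ω)
      simp only [mem_setOf_eq]
      linarith [this.1]
    rw [this, hc.univ]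
  zero_of := fun x hx => by
    have : {ω | x < X ω} = ∅ := by
      apply eq_empty_iff_forall_notMem.mpr
      intro ω
      have := abs_le.mp (hb ω)
      simp only [mem_setOf_eq, not_lt]
      linarith [this.2]
    rw [this, hc.empty]
  Mpos := by linarith

lemma choquet_eq_q {X : Ω → ℝ} {M : ℝ}
    (hs : SurvGood (fun x => c {ω | x < X ω}) M) :
    choquet c X = ∫ p in (0:ℝ)..1, qf (fun x => c {ω | x < X ω}) M p := by
  have h1 := NF1 hs
  have h2 := NF2 hs
  unfold choquet
  linarith

lemma choquet_NF {X : Ω → ℝ} {M : ℝ}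
    (hs : SurvGood (fun x => c {ω | x < X ω}) M) :
    choquet c X = (∫ x in (-M)..M, c {ω | x < X ω}) - M := by
  have h1 := NF1 hs
  unfold choquet
  linarith

lemma A_mono (hc : CapGood c) {X Y : Ω → ℝ} (hX : Measurable X) (hY : Measurable Y)
    (hbX : BddRV X) (hbY : BddRV Y) (hle : ∀ ω, X ω ≤ Y ω) :
    choquet c X ≤ choquet c Y := by
  obtain ⟨MX, hMX⟩ := hbX
  obtain ⟨MY, hMY⟩ := hbY
  set M₀ := max (max MX MY) 0 with hM₀
  have h0 : 0 ≤ M₀ := le_max_right _ _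
  have hbX' : ∀ ω, |X ω| ≤ M₀ := fun ω => le_trans (hMX ω) (le_trans (le_max_left _ _) (le_max_left _ _))
  have hbY' : ∀ ω, |Y ω| ≤ M₀ := fun ω => le_trans (hMY ω) (le_trans (le_max_right _ _) (le_max_left _ _))
  have hsX := surv_of hc hX hbX' h0
  have hsY := surv_of hc hY hbY' h0
  rw [choquet_NF hsX, choquet_NF hsY]
  have hmono : ∀ x ∈ Icc (-(M₀+1)) (M₀+1), c {ω | x < X ω} ≤ c {ω | x < Y ω} := by
    intro x _
    exact hc.mono _ _ (measurableSet_lt measurable_const hX) (measurableSet_lt measurable_const hY)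
      (fun ω hω => lt_of_lt_of_le hω (hle ω))
  have := intervalIntegral.integral_mono_on (μ := volume) (by linarith : -(M₀+1) ≤ M₀+1)
    (hsX.anti.intervalIntegrable) (hsY.anti.intervalIntegrable) hmono
  linarith

lemma A_cash (hc : CapGood c) {X : Ω → ℝ} (hX : Measurable X) (hb : BddRV X) (k : ℝ) :
    choquet c (fun ω => X ω + k) = choquet c X + k := by
  obtain ⟨MX, hMX⟩ := hb
  set M₀ := max MX 0 with hM₀def
  have h0 : 0 ≤ M₀ := le_max_right _ _
  have hbX : ∀ ω, |X ω| ≤ M₀ := fun ω => le_trans (hMX ω) (le_max_left _ _)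
  have habs : 0 ≤ |k| := abs_nonneg k
  have habs2 : -k ≤ |k| := neg_le_abs k
  have habs3 : k ≤ |k| := le_abs_self k
  have hsX0 : SurvGood (fun x => c {ω | x < X ω}) (M₀ + 1) := surv_of hc hX hbX h0
  have hsX : SurvGood (fun x => c {ω | x < X ω}) (M₀ + |k| + 1) :=
    mono_M hsX0 (by linarith)
  have hbXk : ∀ ω, |X ω + k| ≤ M₀ + |k| := fun ω =>
    le_trans (abs_add_le _ _) (by linarith [hbX ω])
  have hsXk : SurvGood (fun x => c {ω | x < X ω + k}) (M₀ + |k| + 1) :=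
    surv_of hc (hX.add_const k) hbXk (by positivity)
  rw [choquet_NF (c := c) (X := fun ω => X ω + k) hsXk, choquet_NF hsX]
  have hset : ∀ x : ℝ, {ω | x < X ω + k} = {ω | x - k < X ω} := by
    intro x; ext ω; simp only [mem_setOf_eq]; constructor <;> intro <;> linarith
  have e1 : (∫ x in (-(M₀+|k|+1))..(M₀+|k|+1), c {ω | x < X ω + k})
      = ∫ x in (-(M₀+|k|+1))..(M₀+|k|+1), c {ω | x - k < X ω} := by
    apply intervalIntegral.integral_congr
    intro x _
    show c {ω | x < X ω + k} = c {ω | x - k < X ω}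
    rw [hset x]
  rw [e1]
  rw [intervalIntegral.integral_comp_sub_right (fun x => c {ω | x < X ω}) k]
  have hint : ∀ a b : ℝ, IntervalIntegrable (fun x => c {ω | x < X ω}) volume a b :=
    fun a b => hsX.anti.intervalIntegrable
  have e2 : (∫ x in (-(M₀+|k|+1)-k)..(-(M₀+|k|+1)), c {ω | x < X ω})
        + (∫ x in (-(M₀+|k|+1))..(M₀+|k|+1-k), c {ω | x < X ω})
      = ∫ x in (-(M₀+|k|+1)-k)..(M₀+|k|+1-k), c {ω | x < X ω} :=
    intervalIntegral.integral_add_adjacent_intervals (hint _ _) (hint _ _)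
  have e3 : (∫ x in (-(M₀+|k|+1))..(M₀+|k|+1), c {ω | x < X ω})
        + (∫ x in (M₀+|k|+1)..(M₀+|k|+1-k), c {ω | x < X ω})
      = ∫ x in (-(M₀+|k|+1))..(M₀+|k|+1-k), c {ω | x < X ω} :=
    intervalIntegral.integral_add_adjacent_intervals (hint _ _) (hint _ _)
  have c1 : (∫ x in (-(M₀+|k|+1)-k)..(-(M₀+|k|+1)), c {ω | x < X ω}) = k := by
    rw [intervalIntegral.integral_congr (g := fun _ => (1:ℝ)) ?_]
    · rw [intervalIntegral.integral_const]
      simp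
    · intro x hx
      show c {ω | x < X ω} = 1
      rcases mem_uIcc.mp hx with ⟨h1, h2⟩ | ⟨h1, h2⟩ <;>
        exact hsX0.one_of x (by linarith)
  have c2 : (∫ x in (M₀+|k|+1)..(M₀+|k|+1-k), c {ω | x < X ω}) = 0 := by
    rw [intervalIntegral.integral_congr (g := fun _ => (0:ℝ)) ?_]
    · simp
    · intro x hx
      show c {ω | x < X ω} = 0
      rcases mem_uIcc.mp hx with ⟨h1, h2⟩ | ⟨h1, h2⟩ <;>
        exact hsX0.zero_of x (by linarith)
  linarith

lemma A_comono (hc : CapGood c) {X Y : Ω → ℝ} (hX : Measurable X) (hY : Measurable Y)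
    (hbX : BddRV X) (hbY : BddRV Y) (hcom : Comonotonic X Y) :
    choquet c (fun ω => X ω + Y ω) = choquet c X + choquet c Y := by
  obtain ⟨MX, hMX⟩ := hbX
  obtain ⟨MY, hMY⟩ := hbY
  set M₀ := max (max MX MY) 0 with hM₀
  have h0 : (0:ℝ) ≤ M₀ := le_max_right _ _
  have hbX' : ∀ ω, |X ω| ≤ M₀ := fun ω =>
    le_trans (hMX ω) (le_trans (le_max_left _ _) (le_max_left _ _))
  have hbY' : ∀ ω, |Y ω| ≤ M₀ := fun ω =>
    le_trans (hMY ω) (le_trans (le_max_right _ _) (le_max_left _ _))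
  have hbZ : ∀ ω, |X ω + Y ω| ≤ M₀ + M₀ := fun ω =>
    le_trans (abs_add_le _ _) (by linarith [hbX' ω, hbY' ω])
  have hsX : SurvGood (fun x => c {ω | x < X ω}) (M₀ + 1) := surv_of hc hX hbX' h0
  have hsY : SurvGood (fun x => c {ω | x < Y ω}) (M₀ + 1) := surv_of hc hY hbY' h0
  have hsZ : SurvGood (fun x => c {ω | x < X ω + Y ω}) (M₀ + M₀ + 1) :=
    surv_of hc (hX.add hY) hbZ (by linarith)
  -- chain property
  have hmX : ∀ x : ℝ, MeasurableSet {ω | x < X ω} :=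
    fun x => measurableSet_lt measurable_const hX
  have hmY : ∀ y : ℝ, MeasurableSet {ω | y < Y ω} :=
    fun y => measurableSet_lt measurable_const hY
  have hmZ : ∀ z : ℝ, MeasurableSet {ω | z < X ω + Y ω} :=
    fun z => measurableSet_lt measurable_const (hX.add hY)
  have hchain : ∀ x y : ℝ, {ω | x < X ω} ⊆ {ω | y < Y ω} ∨ {ω | y < Y ω} ⊆ {ω | x < X ω} := by
    intro x y
    by_contra hcon
    push_neg at hcon
    obtain ⟨ω, hω1, hω2⟩ := not_subset.mp hcon.1
    obtain ⟨ω', hω'1, hω'2⟩ := not_subset.mp hcon.2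
    simp only [mem_setOf_eq, not_lt] at hω1 hω2 hω'1 hω'2
    have := hcom ω ω'
    nlinarith
  -- the key quantile additivity
  have key : ∀ p ∈ Ioo (0:ℝ) 1,
      qf (fun x => c {ω | x < X ω + Y ω}) (M₀ + M₀ + 1) p
        = qf (fun x => c {ω | x < X ω}) (M₀ + 1) p
          + qf (fun x => c {ω | x < Y ω}) (M₀ + 1) p := by
    rintro p ⟨hp0, hp1⟩
    rw [hsX.qf_eq hp1, hsY.qf_eq hp1, hsZ.qf_eq hp1]
    set SX := {x : ℝ | p < c {ω | x < X ω}} with hSX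
    set SY := {y : ℝ | p < c {ω | y < Y ω}} with hSY
    set SZ := {z : ℝ | p < c {ω | z < X ω + Y ω}} with hSZ
    have hSXne : SX.Nonempty := hsX.S_nonempty hp1
    have hSYne : SY.Nonempty := hsY.S_nonempty hp1
    have hSZne : SZ.Nonempty := hsZ.S_nonempty hp1
    have hSXb : BddAbove SX := hsX.S_bdd hp0.le
    have hSYb : BddAbove SY := hsY.S_bdd hp0.le
    have hSZb : BddAbove SZ := hsZ.S_bdd hp0.le
    apply le_antisymm
    · -- qZ ≤ qX + qY
      apply csSup_le hSZne
      intro z hz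
      by_contra hcon
      push_neg at hcon
      set x := sSup SX + (z - sSup SX - sSup SY) / 2 with hxdef
      set y := z - x with hydef
      have hxgt : sSup SX < x := by rw [hxdef]; linarith
      have hygt : sSup SY < y := by rw [hydef, hxdef]; linarith
      have hgx : c {ω | x < X ω} ≤ p := by
        have := hsX.g_le_of_qf_lt hp0.le hp1 (by rw [hsX.qf_eq hp1]; exact hxgt)
        exact this
      have hgy : c {ω | y < Y ω} ≤ p := by
        have := hsY.g_le_of_qf_lt hp0.le hp1 (by rw [hsY.qf_eq hp1]; exact hygt)
        exact this
      have hsub : {ω | z < X ω + Y ω} ⊆ {ω | x < X ω} ∪ {ω | y < Y ω} := by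
        intro ω hω
        simp only [mem_setOf_eq] at hω
        simp only [mem_union, mem_setOf_eq]
        by_contra hcc
        push_neg at hcc
        have hxy : x + y = z := by rw [hydef]; ring
        linarith [hcc.1, hcc.2]
      have hle : c {ω | z < X ω + Y ω} ≤ p := by
        rcases hchain x y with hc1 | hc1
        · have hU : {ω | x < X ω} ∪ {ω | y < Y ω} = {ω | y < Y ω} := union_eq_right.mpr hc1
          rw [hU] at hsub
          exact le_trans (hc.mono _ _ (hmZ z) (hmY y) hsub) hgy
        · have hU : {ω | x < X ω} ∪ {ω | y < Y ω} = {ω | x < X ω} := union_eq_left.mpr hc1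
          rw [hU] at hsub
          exact le_trans (hc.mono _ _ (hmZ z) (hmX x) hsub) hgx
      rw [hSZ] at hz
      exact absurd hz (not_lt.mpr (by exact_mod_cast hle))
    · -- qX + qY ≤ qZ
      by_contra hcon
      push_neg at hcon
      have h1 : sSup SX - (sSup SX + sSup SY - sSup SZ) / 2 < sSup SX := by
        have : 0 < sSup SX + sSup SY - sSup SZ := by linarith
        linarith
      obtain ⟨x, hxS, hx⟩ := exists_lt_of_lt_csSup hSXne h1
      have h2 : sSup SY - (sSup SX + sSup SY - sSup SZ) / 2 < sSup SY := by
        have : 0 < sSup SX + sSup SY - sSup SZ := by linarith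
        linarith
      obtain ⟨y, hyS, hy⟩ := exists_lt_of_lt_csSup hSYne h2
      have hxyZ : x + y ∈ SZ := by
        have hsub : {ω | x < X ω} ∩ {ω | y < Y ω} ⊆ {ω | x + y < X ω + Y ω} := by
          rintro ω ⟨h1', h2'⟩
          simp only [mem_setOf_eq] at h1' h2' ⊢
          exact add_lt_add h1' h2'
        rw [hSZ]
        simp only [mem_setOf_eq]
        rcases hchain x y with hc1 | hc1
        · have hI : {ω | x < X ω} ∩ {ω | y < Y ω} = {ω | x < X ω} := inter_eq_left.mpr hc1
          rw [hI] at hsub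
          calc p < c {ω | x < X ω} := hxS
          _ ≤ c {ω | x + y < X ω + Y ω} := hc.mono _ _ (hmX x) (hmZ (x+y)) hsub
        · have hI : {ω | x < X ω} ∩ {ω | y < Y ω} = {ω | y < Y ω} := inter_eq_right.mpr hc1
          rw [hI] at hsub
          calc p < c {ω | y < Y ω} := hyS
          _ ≤ c {ω | x + y < X ω + Y ω} := hc.mono _ _ (hmY y) (hmZ (x+y)) hsub
      have := le_csSup hSZb hxyZ
      linarith
  -- integrate
  rw [choquet_eq_q (c := c) (X := fun ω => X ω + Y ω) hsZ, choquet_eq_q hsX, choquet_eq_q hsY]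
  have hiX : IntegrableOn (qf (fun x => c {ω | x < X ω}) (M₀ + 1)) (Ioo (0:ℝ) 1) volume :=
    (hsX.qf_intInt).1.mono_set Ioo_subset_Ioc_self
  have hiY : IntegrableOn (qf (fun x => c {ω | x < Y ω}) (M₀ + 1)) (Ioo (0:ℝ) 1) volume :=
    (hsY.qf_intInt).1.mono_set Ioo_subset_Ioc_self
  rw [intervalIntegral.integral_of_le (zero_le_one), integral_Ioc_eq_integral_Ioo,
    intervalIntegral.integral_of_le (zero_le_one), integral_Ioc_eq_integral_Ioo,
    intervalIntegral.integral_of_le (zero_le_one), integral_Ioc_eq_integral_Ioo]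
  rw [setIntegral_congr_fun measurableSet_Ioo
    (fun p hp => by rw [key p hp])]
  exact integral_add hiX hiY

lemma choquet_indicator (hc : CapGood c) {A : Set Ω} (hA : MeasurableSet A) :
    choquet c (A.indicator fun _ => (1:ℝ)) = c A := by
  have hval : ∀ ω, A.indicator (fun _ => (1:ℝ)) ω = 0 ∨ A.indicator (fun _ => (1:ℝ)) ω = 1 := by
    intro ω
    by_cases h : ω ∈ A
    · right; simp [h]
    · left; simp [h]
  have hset : ∀ x : ℝ, x < 0 → {ω | x < A.indicator (fun _ => (1:ℝ)) ω} = univ := by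
    intro x hx
    apply eq_univ_iff_forall.mpr
    intro ω
    simp only [mem_setOf_eq]
    rcases hval ω with h | h <;> rw [h] <;> linarith
  have hsetA : ∀ x : ℝ, 0 ≤ x → x < 1 → {ω | x < A.indicator (fun _ => (1:ℝ)) ω} = A := by
    intro x hx0 hx1
    ext ω
    simp only [mem_setOf_eq]
    by_cases h : ω ∈ A
    · simp [h, hx1]
    · simp [h]
      linarith
  have hsetE : ∀ x : ℝ, 1 ≤ x → {ω | x < A.indicator (fun _ => (1:ℝ)) ω} = ∅ := by
    intro x hx
    apply eq_empty_iff_forall_notMem.mpr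
    intro ω
    simp only [mem_setOf_eq, not_lt]
    rcases hval ω with h | h <;> rw [h] <;> linarith
  unfold choquet
  have e1 : (∫ x in Iio (0:ℝ), (c {ω | x < A.indicator (fun _ => (1:ℝ)) ω} - 1)) = 0 := by
    rw [setIntegral_congr_fun (g := fun _ => (0:ℝ)) measurableSet_Iio
      (fun x hx => by rw [hset x hx, hc.univ]; ring)]
    exact integral_zero _ _
  have e2 : (∫ x in Ioi (0:ℝ), c {ω | x < A.indicator (fun _ => (1:ℝ)) ω}) = c A := by
    rw [setIntegral_congr_fun (g := (Ioo (0:ℝ) 1).indicator (fun _ => c A)) measurableSet_Ioi ?_]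
    · rw [setIntegral_indicator measurableSet_Ioo]
      rw [show Ioi (0:ℝ) ∩ Ioo 0 1 = Ioo 0 1 from inter_eq_right.mpr (fun x hx => hx.1)]
      rw [setIntegral_const]
      simp [Real.volume_Ioo]
    · intro x hx
      show c {ω | x < A.indicator (fun _ => (1:ℝ)) ω} = (Ioo (0:ℝ) 1).indicator (fun _ => c A) x
      by_cases hx1 : x < 1
      · rw [hsetA x (le_of_lt hx) hx1, indicator_of_mem (mem_Ioo.mpr ⟨mem_Ioi.mp hx, hx1⟩)]
      · push_neg at hx1
        rw [hsetE x hx1, hc.empty, indicator_of_notMem (by simp [not_lt.mpr hx1])]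
  rw [e1, e2, zero_add]

lemma A_qbased {n : ℕ} (Q : Fin n → Measure Ω) (hprob : ∀ i, IsProbabilityMeasure (Q i))
    (ψ : (Fin n → ℝ) → ℝ) {X Y : Ω → ℝ} (hX : Measurable X) (hY : Measurable Y)
    (hdist : ∀ i : Fin n, ∀ x : ℝ, Q i {ω | X ω ≤ x} = Q i {ω | Y ω ≤ x}) :
    choquet (fun A => ψ (fun i => (Q i A).toReal)) X
      = choquet (fun A => ψ (fun i => (Q i A).toReal)) Y := by
  have hQ : ∀ (i : Fin n) (x : ℝ), Q i {ω | x < X ω} = Q i {ω | x < Y ω} := by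
    intro i x
    have hXc : {ω | x < X ω} = {ω | X ω ≤ x}ᶜ := by
      ext ω; simp only [mem_setOf_eq, mem_compl_iff, not_le]
    have hYc : {ω | x < Y ω} = {ω | Y ω ≤ x}ᶜ := by
      ext ω; simp only [mem_setOf_eq, mem_compl_iff, not_le]
    rw [hXc, hYc, measure_compl (measurableSet_le hX measurable_const) (measure_ne_top _ _),
      measure_compl (measurableSet_le hY measurable_const) (measure_ne_top _ _), hdist i x]
  have hfun : ∀ x : ℝ,
      (fun i => (Q i {ω | x < X ω}).toReal) = fun i => (Q i {ω | x < Y ω}).toReal :=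
    fun x => funext fun i => by rw [hQ i x]
  unfold choquet
  congr 1
  · refine setIntegral_congr_fun measurableSet_Iio (fun x _ => ?_)
    show ψ (fun i => (Q i {ω | x < X ω}).toReal) - 1 = ψ (fun i => (Q i {ω | x < Y ω}).toReal) - 1
    rw [hfun x]
  · refine setIntegral_congr_fun measurableSet_Ioi (fun x _ => ?_)
    show ψ (fun i => (Q i {ω | x < X ω}).toReal) = ψ (fun i => (Q i {ω | x < Y ω}).toReal)
    rw [hfun x]

end Cap

section Rho
variable {Ω : Type*} [MeasurableSpace Ω] {ρ : (Ω → ℝ) → ℝ}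

def IsCash (ρ : (Ω → ℝ) → ℝ) : Prop := ∀ X : Ω → ℝ, Measurable X → BddRV X → ∀ c : ℝ,
  ρ (fun ω => X ω + c) = ρ X + c
def IsMono (ρ : (Ω → ℝ) → ℝ) : Prop := ∀ X Y : Ω → ℝ, Measurable X → Measurable Y →
  BddRV X → BddRV Y → (∀ ω, X ω ≤ Y ω) → ρ X ≤ ρ Y
def IsComAdd (ρ : (Ω → ℝ) → ℝ) : Prop := ∀ X Y : Ω → ℝ, Measurable X → Measurable Y →
  BddRV X → BddRV Y → Comonotonic X Y → ρ (fun ω => X ω + Y ω) = ρ X + ρ Y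

lemma bdd_const (k : ℝ) : BddRV (fun _ : Ω => k) := ⟨|k|, fun _ => le_rfl⟩

lemma bdd_indicator (A : Set Ω) (b : ℝ) : BddRV (A.indicator fun _ => b) := by
  refine ⟨|b|, fun ω => ?_⟩
  by_cases h : ω ∈ A <;> simp [h, abs_nonneg]

lemma rho_zero (hadd : IsComAdd ρ) : ρ (fun _ => (0:ℝ)) = 0 := by
  have h := hadd (fun _ => 0) (fun _ => 0) measurable_const measurable_const
    (bdd_const 0) (bdd_const 0) (fun ω ω' => by simp)
  have he : (fun ω : Ω => (fun _: Ω => (0:ℝ)) ω + (fun _ : Ω => (0:ℝ)) ω) = fun _ => (0:ℝ) := by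
    funext ω; simp
  rw [he] at h
  linarith

lemma rho_const (hcash : IsCash ρ) (hadd : IsComAdd ρ) (k : ℝ) :
    ρ (fun _ : Ω => k) = k := by
  have h := hcash (fun _ => 0) measurable_const (bdd_const 0) k
  have he : (fun ω : Ω => (fun _ : Ω => (0:ℝ)) ω + k) = fun _ => k := by funext ω; simp
  rw [he, rho_zero hadd] at h
  linarith

lemma rho_lip (hcash : IsCash ρ) (hmono : IsMono ρ) {X Y : Ω → ℝ}
    (hX : Measurable X) (hY : Measurable Y) (hbX : BddRV X) (hbY : BddRV Y)
    {d : ℝ} (hd : ∀ ω, |X ω - Y ω| ≤ d) : |ρ X - ρ Y| ≤ d := by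
  obtain ⟨MY, hMY⟩ := hbY
  obtain ⟨MX, hMX⟩ := hbX
  have h1 : ρ X ≤ ρ Y + d := by
    have hle : ∀ ω, X ω ≤ Y ω + d := fun ω => by
      have := abs_le.mp (hd ω); linarith [this.2]
    have := hmono X (fun ω => Y ω + d) hX (hY.add_const d) ⟨MX, hMX⟩
      ⟨MY + |d|, fun ω => le_trans (abs_add_le _ _) (by linarith [hMY ω])⟩ hle
    rw [hcash Y hY ⟨MY, hMY⟩ d] at this
    linarith
  have h2 : ρ Y ≤ ρ X + d := by
    have hle : ∀ ω, Y ω ≤ X ω + d := fun ω => by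
      have := abs_le.mp (hd ω); linarith [this.1]
    have := hmono Y (fun ω => X ω + d) hY (hX.add_const d) ⟨MY, hMY⟩
      ⟨MX + |d|, fun ω => le_trans (abs_add_le _ _) (by linarith [hMX ω])⟩ hle
    rw [hcash X hX ⟨MX, hMX⟩ d] at this
    linarith
  exact abs_le.mpr ⟨by linarith, by linarith⟩

lemma rho_smul (hcash : IsCash ρ) (hmono : IsMono ρ) (hadd : IsComAdd ρ)
    {A : Set Ω} (hA : MeasurableSet A) :
    ∀ a : ℝ, 0 ≤ a →
      ρ (A.indicator fun _ => a) = a * ρ (A.indicator fun _ => (1:ℝ)) := by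
  have hmeas : ∀ b : ℝ, Measurable (A.indicator fun _ => b) :=
    fun b => measurable_const.indicator hA
  set φ : ℝ → ℝ := fun b => ρ (A.indicator fun _ => b) with hφ
  have hcom : ∀ b k : ℝ, 0 ≤ b → 0 ≤ k →
      Comonotonic (A.indicator fun _ => b) (A.indicator fun _ => k) := by
    intro b k hb hk ω ω'
    by_cases h1 : ω ∈ A <;> by_cases h2 : ω' ∈ A <;>
      simp [h1, h2] <;> positivity
  have haddφ : ∀ b k : ℝ, 0 ≤ b → 0 ≤ k → φ (b + k) = φ b + φ k := by
    intro b k hb hk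
    have h := hadd _ _ (hmeas b) (hmeas k) (bdd_indicator A b) (bdd_indicator A k)
      (hcom b k hb hk)
    rw [← h]
    simp only [hφ]
    congr 1
    funext ω
    by_cases h1 : ω ∈ A <;> simp [h1]
  have hzero : φ 0 = 0 := by
    have := haddφ 0 0 le_rfl le_rfl
    norm_num at this
    linarith
  have hlip : ∀ b k : ℝ, |φ b - φ k| ≤ |b - k| := by
    intro b k
    apply rho_lip hcash hmono (hmeas b) (hmeas k) (bdd_indicator A b) (bdd_indicator A k)
    intro ω
    by_cases h1 : ω ∈ A <;> simp [h1, abs_nonneg]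
  have hnat : ∀ (m : ℕ) (b : ℝ), 0 ≤ b → φ (m * b) = m * φ b := by
    intro m
    induction m with
    | zero => intro b hb; simpa using hzero
    | succ m ih =>
      intro b hb
      have he : ((m:ℝ) + 1) * b = m * b + b := by ring
      rw [Nat.cast_succ, he, haddφ _ _ (by positivity) hb, ih b hb]
      ring
  intro a ha
  show φ a = a * φ 1
  have key : ∀ n : ℕ, 0 < n → |φ a - a * φ 1| ≤ (1 + |φ 1|) / n := by
    intro n hn
    have hn' : (0:ℝ) < n := by exact_mod_cast hn
    set k := ⌊a * n⌋₊ with hk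
    have hk1 : (k:ℝ) ≤ a * n := Nat.floor_le (by positivity)
    have hk2 : a * n < k + 1 := Nat.lt_floor_add_one _
    have hone : φ (1/n) = φ 1 / n := by
      have h := hnat n (1/n) (by positivity)
      rw [show (n:ℝ) * (1/n) = 1 by field_simp] at h
      rw [h]; field_simp
    have hkn : φ ((k:ℝ)/n) = (k:ℝ)/n * φ 1 := by
      have h := hnat k (1/n) (by positivity)
      rw [show (k:ℝ) * (1/n) = k/n by ring] at h
      rw [h, hone]
      ring
    have h1 : |φ a - φ ((k:ℝ)/n)| ≤ |a - (k:ℝ)/n| := hlip _ _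
    have h2 : |a - (k:ℝ)/n| ≤ 1/n := by
      rw [abs_of_nonneg (by rw [le_sub_iff_add_le, zero_add, div_le_iff₀ hn']; exact hk1)]
      rw [sub_le_iff_le_add, ← add_div, le_div_iff₀ hn']
      linarith
    calc |φ a - a * φ 1|
        ≤ |φ a - φ ((k:ℝ)/n)| + |φ ((k:ℝ)/n) - a * φ 1| := abs_sub_le _ _ _
      _ = |φ a - φ ((k:ℝ)/n)| + |((k:ℝ)/n - a) * φ 1| := by rw [hkn, sub_mul]
      _ = |φ a - φ ((k:ℝ)/n)| + |(k:ℝ)/n - a| * |φ 1| := by rw [abs_mul]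
      _ ≤ 1/n + (1/n) * |φ 1| := by
          have := abs_sub_comm a ((k:ℝ)/n)
          gcongr
          · linarith [h1, h2]
          · rw [← this]; exact h2
      _ = (1 + |φ 1|) / n := by ring
  by_contra hne
  have hd : 0 < |φ a - a * φ 1| := abs_pos.mpr (sub_ne_zero.mpr hne)
  obtain ⟨n, hngt⟩ := exists_nat_gt ((1 + |φ 1|) / |φ a - a * φ 1|)
  have hpos : (0:ℝ) < (1 + |φ 1|) / |φ a - a * φ 1| := by positivity
  have hn0 : 0 < n := by
    rcases Nat.eq_zero_or_pos n with h0 | h0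
    · subst h0; norm_num at hngt; linarith
    · exact h0
  have hn' : (0:ℝ) < n := by exact_mod_cast hn0
  have hlt : (1 + |φ 1|) / n < |φ a - a * φ 1| := by
    rw [div_lt_iff₀ hn']
    rw [div_lt_iff₀ hd] at hngt
    linarith [mul_comm (|φ a - a * φ 1|) (n:ℝ)]
  linarith [key n hn0]

lemma rho_chain (hcash : IsCash ρ) (hmono : IsMono ρ) (hadd : IsComAdd ρ) :
    ∀ (m : ℕ) (A : Fin m → Set Ω), (∀ i, MeasurableSet (A i)) →
    (∀ i j : Fin m, i ≤ j → A j ⊆ A i) → ∀ (a : Fin m → ℝ), (∀ i, 0 ≤ a i) →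
    ρ (fun ω => ∑ i, a i * (A i).indicator (fun _ => (1:ℝ)) ω)
      = ∑ i, a i * ρ ((A i).indicator fun _ => (1:ℝ)) := by
  intro m
  induction m with
  | zero =>
    intro A hA hchain a ha
    simp only [Finset.univ_eq_empty, Finset.sum_empty]
    exact rho_zero hadd
  | succ m ih =>
    intro A hA hchain a ha
    set X : Ω → ℝ := fun ω => a 0 * (A 0).indicator (fun _ => (1:ℝ)) ω with hXdef
    set Y : Ω → ℝ := fun ω => ∑ i : Fin m, a i.succ * (A i.succ).indicator (fun _ => (1:ℝ)) ω
      with hYdef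
    have hXmeas : Measurable X := (measurable_const.indicator (hA 0)).const_mul (a 0)
    have hYmeas : Measurable Y :=
      Finset.measurable_sum Finset.univ
        (fun i _ => (measurable_const.indicator (hA i.succ)).const_mul (a i.succ))
    have hterm : ∀ (i : Fin (m+1)) ω, 0 ≤ a i * (A i).indicator (fun _ => (1:ℝ)) ω := by
      intro i ω
      by_cases h : ω ∈ A i <;> simp [h, ha i]
    have htermle : ∀ (i : Fin (m+1)) ω, a i * (A i).indicator (fun _ => (1:ℝ)) ω ≤ a i := by
      intro i ω
      by_cases h : ω ∈ A i <;> simp [h, ha i]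
    have hXbdd : BddRV X := by
      refine ⟨a 0, fun ω => ?_⟩
      rw [abs_of_nonneg (hterm 0 ω)]
      exact htermle 0 ω
    have hYbdd : BddRV Y := by
      refine ⟨∑ i : Fin m, a i.succ, fun ω => ?_⟩
      rw [abs_of_nonneg (Finset.sum_nonneg (fun i _ => hterm i.succ ω))]
      exact Finset.sum_le_sum (fun i _ => htermle i.succ ω)
    have hYnonneg : ∀ ω, 0 ≤ Y ω := fun ω => Finset.sum_nonneg (fun i _ => hterm i.succ ω)
    have hYzero : ∀ ω, ω ∉ A 0 → Y ω = 0 := by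
      intro ω hω
      apply Finset.sum_eq_zero
      intro i _
      have : ω ∉ A i.succ := fun hmem => hω (hchain 0 i.succ (Fin.zero_le _) hmem)
      simp [this]
    have hcomono : Comonotonic X Y := by
      intro ω ω'
      by_cases h0 : ω ∈ A 0 <;> by_cases h0' : ω' ∈ A 0
      · have : X ω - X ω' = 0 := by simp [hXdef, h0, h0']
        rw [this, zero_mul]
      · have h1 : X ω - X ω' = a 0 := by simp [hXdef, h0, h0']
        have h2 : Y ω' = 0 := hYzero ω' h0'
        rw [h1, h2]
        have := hYnonneg ω
        nlinarith [ha 0]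
      · have h1 : X ω - X ω' = -(a 0) := by simp [hXdef, h0, h0']
        have h2 : Y ω = 0 := hYzero ω h0
        rw [h1, h2]
        have := hYnonneg ω'
        nlinarith [ha 0]
      · have : X ω - X ω' = 0 := by simp [hXdef, h0, h0']
        rw [this, zero_mul]
    have hsum : (fun ω => ∑ i : Fin (m+1), a i * (A i).indicator (fun _ => (1:ℝ)) ω)
        = fun ω => X ω + Y ω := by
      funext ω
      rw [Fin.sum_univ_succ]
    rw [hsum, hadd X Y hXmeas hYmeas hXbdd hYbdd hcomono]
    have hX : ρ X = a 0 * ρ ((A 0).indicator fun _ => (1:ℝ)) := by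
      have h := rho_smul hcash hmono hadd (hA 0) (a 0) (ha 0)
      have he : (A 0).indicator (fun _ => a 0) = X := by
        funext ω
        by_cases hm : ω ∈ A 0 <;> simp [hXdef, hm]
      rw [he] at h
      exact h
    have hY : ρ Y = ∑ i : Fin m, a i.succ * ρ ((A i.succ).indicator fun _ => (1:ℝ)) :=
      ih (fun i => A i.succ) (fun i => hA i.succ)
        (fun i j hij => hchain i.succ j.succ (Fin.succ_le_succ_iff.mpr hij))
        (fun i => a i.succ) (fun i => ha i.succ)
    rw [hX, hY, Fin.sum_univ_succ]

lemma approx_bound {Ω : Type*} (X : Ω → ℝ) (M δ : ℝ) (hδ : 0 < δ) (K : ℕ)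
    (hK : 2 * M ≤ K * δ) (hb : ∀ ω, |X ω| ≤ M) (ω : Ω) :
    X ω - δ ≤ (∑ k : Fin K, δ * ({ω' | -M + ((k:ℕ)+1) * δ < X ω'}.indicator
        (fun _ => (1:ℝ)) ω)) - M ∧
    (∑ k : Fin K, δ * ({ω' | -M + ((k:ℕ)+1) * δ < X ω'}.indicator
        (fun _ => (1:ℝ)) ω)) - M ≤ X ω := by
  have hbω := abs_le.mp (hb ω)
  set r := X ω + M with hr
  have hr0 : 0 ≤ r := by linarith [hbω.1]
  have hr2M : r ≤ 2 * M := by linarith [hbω.2]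
  set P : Fin K → Prop := fun k => ((k:ℕ)+1) * δ < r with hP
  have hPdec : DecidablePred P := fun k => Real.decidableLT _ _
  set T := Finset.univ.filter (fun k : Fin K => ((k:ℕ)+1) * δ < r) with hT
  have hsum : (∑ k : Fin K, δ * ({ω' | -M + ((k:ℕ)+1) * δ < X ω'}.indicator
      (fun _ => (1:ℝ)) ω)) = T.card * δ := by
    have he : ∀ k : Fin K, δ * ({ω' | -M + ((k:ℕ)+1) * δ < X ω'}.indicator
        (fun _ => (1:ℝ)) ω) = if ((k:ℕ)+1) * δ < r then δ else 0 := by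
      intro k
      by_cases h : ((k:ℕ)+1) * δ < r
      · have hmem : ω ∈ {ω' | -M + ((k:ℕ)+1) * δ < X ω'} := by
          simp only [mem_setOf_eq]; linarith
        rw [Set.indicator_of_mem hmem, if_pos h, mul_one]
      · have hmem : ω ∉ {ω' | -M + ((k:ℕ)+1) * δ < X ω'} := by
          simp only [mem_setOf_eq, not_lt]
          push_neg at h
          linarith
        rw [Set.indicator_of_notMem hmem, if_neg h, mul_zero]
    rw [Finset.sum_congr rfl (fun k _ => he k), ← Finset.sum_filter, Finset.sum_const,
      nsmul_eq_mul]
  rw [hsum]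
  constructor
  · -- lower:  X ω - δ ≤ T.card * δ - M,  i.e.  r ≤ (T.card + 1) * δ
    by_contra hcon
    push_neg at hcon
    have hcard : ((T.card : ℝ) + 1) * δ < r := by nlinarith
    by_cases hc : T.card < K
    · have hsubcard : T.card + 1 ≤ T.card := by
        have : (Finset.range (T.card + 1)).card ≤ T.card := by
          apply Finset.card_le_card_of_injOn (fun j => if h : j < K then (⟨j, h⟩ : Fin K) else ⟨T.card, hc⟩)
          · intro j hj
            have hjle : j ≤ T.card := Nat.lt_succ_iff.mp (Finset.mem_range.mp hj)
            have hjK : j < K := lt_of_le_of_lt hjle hc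
            simp only [dif_pos hjK]
            refine Finset.mem_filter.mpr ⟨Finset.mem_univ _, ?_⟩
            have : ((j:ℝ)+1) * δ ≤ ((T.card:ℝ)+1) * δ := by
              have : (j:ℝ) ≤ T.card := by exact_mod_cast hjle
              nlinarith
            linarith
          · intro j hj j' hj' heq
            have hjK : j < K := lt_of_le_of_lt (Nat.lt_succ_iff.mp (Finset.mem_range.mp hj)) hc
            have hj'K : j' < K := lt_of_le_of_lt (Nat.lt_succ_iff.mp (Finset.mem_range.mp hj')) hc
            simp only [dif_pos hjK, dif_pos hj'K, Fin.mk.injEq] at heq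
            exact heq
        simpa using this
      omega
    · push_neg at hc
      have hle : T.card ≤ K := le_trans (Finset.card_filter_le _ _) (by simp)
      have heq : T.card = K := le_antisymm hle hc
      rw [heq] at hcard
      nlinarith
  · -- upper : T.card * δ - M ≤ X ω, i.e. T.card * δ ≤ r
    rcases Finset.eq_empty_or_nonempty T with hTe | hTne
    · rw [hTe]
      simp
      linarith [hbω.1]
    · set k0 := T.max' hTne with hk0
      have hk0mem : k0 ∈ T := T.max'_mem hTne
      have hk0P : ((k0:ℕ)+1) * δ < r := (Finset.mem_filter.mp hk0mem).2
      have hcardle : T.card ≤ (k0:ℕ) + 1 := by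
        have : T.card ≤ (Finset.range ((k0:ℕ)+1)).card := by
          apply Finset.card_le_card_of_injOn (fun j : Fin K => (j:ℕ))
          · intro j hj
            rw [Finset.mem_coe, Finset.mem_range, Nat.lt_succ_iff]
            exact_mod_cast T.le_max' j hj
          · intro j _ j' _ heq
            exact Fin.val_injective heq
        simpa using this
      have : (T.card : ℝ) * δ ≤ ((k0:ℕ)+1) * δ := by
        have : (T.card : ℝ) ≤ (k0:ℕ)+1 := by exact_mod_cast hcardle
        nlinarith
      linarith
lemma uniq {ρ₁ ρ₂ : (Ω → ℝ) → ℝ}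
    (hc1 : IsCash ρ₁) (hm1 : IsMono ρ₁) (ha1 : IsComAdd ρ₁)
    (hc2 : IsCash ρ₂) (hm2 : IsMono ρ₂) (ha2 : IsComAdd ρ₂)
    (hind : ∀ A : Set Ω, MeasurableSet A →
      ρ₁ (A.indicator fun _ => (1:ℝ)) = ρ₂ (A.indicator fun _ => (1:ℝ)))
    {X : Ω → ℝ} (hX : Measurable X) (hb : BddRV X) : ρ₁ X = ρ₂ X := by
  obtain ⟨M₀, hM₀⟩ := hb
  set M := max M₀ 0 with hM
  have hM0 : (0:ℝ) ≤ M := le_max_right _ _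
  have hbX : ∀ ω, |X ω| ≤ M := fun ω => le_trans (hM₀ ω) (le_max_left _ _)
  suffices h : ∀ δ : ℝ, 0 < δ → |ρ₁ X - ρ₂ X| ≤ 2 * δ by
    by_contra hne
    have hd : 0 < |ρ₁ X - ρ₂ X| := abs_pos.mpr (sub_ne_zero.mpr hne)
    have := h (|ρ₁ X - ρ₂ X| / 4) (by positivity)
    linarith
  intro δ hδ
  set K := ⌈2 * M / δ⌉₊ with hKdef
  have hK : 2 * M ≤ K * δ := by
    have h1 := Nat.le_ceil (2 * M / δ)
    rw [div_le_iff₀ hδ] at h1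
    exact_mod_cast h1
  set A : Fin K → Set Ω := fun k => {ω' | -M + ((k:ℕ)+1) * δ < X ω'} with hA
  set S : Ω → ℝ := fun ω => ∑ k : Fin K, δ * (A k).indicator (fun _ => (1:ℝ)) ω with hS
  set X' : Ω → ℝ := fun ω => S ω + (-M) with hX'
  have happrox := fun ω => approx_bound X M δ hδ K hK hbX ω
  have hAmeas : ∀ k, MeasurableSet (A k) := fun k => measurableSet_lt measurable_const hX
  have hchain : ∀ i j : Fin K, i ≤ j → A j ⊆ A i := by
    intro i j hij ω hω
    simp only [hA, mem_setOf_eq] at hω ⊢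
    have hcast : ((i:ℕ):ℝ) ≤ ((j:ℕ):ℝ) := by exact_mod_cast hij
    nlinarith
  have hSmeas : Measurable S := by
    rw [hS]
    exact Finset.measurable_sum Finset.univ
      (fun k _ => (measurable_const.indicator (hAmeas k)).const_mul δ)
  have hX'val : ∀ ω, X' ω = (∑ k : Fin K, δ * ({ω' | -M + ((k:ℕ)+1) * δ < X ω'}.indicator
      (fun _ => (1:ℝ)) ω)) - M := by
    intro ω
    simp only [hX', hS, hA, sub_eq_add_neg]
  have hclose : ∀ ω, X ω - δ ≤ X' ω ∧ X' ω ≤ X ω := by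
    intro ω
    rw [hX'val ω]
    exact happrox ω
  have hX'meas : Measurable X' := by
    rw [hX']
    exact hSmeas.add_const _
  have hX'bdd : BddRV X' := by
    refine ⟨M + δ, fun ω => abs_le.mpr ⟨?_, ?_⟩⟩
    · linarith [(hclose ω).1, (abs_le.mp (hbX ω)).1]
    · linarith [(hclose ω).2, (abs_le.mp (hbX ω)).2]
  have hSbdd : BddRV S := by
    refine ⟨M + δ + M, fun ω => ?_⟩
    have h1 := abs_le.mp (hX'bdd.choose_spec ω)
    have h2 : S ω = X' ω + M := by rw [hX']; ring
    rw [h2]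
    rw [abs_le]
    have := abs_le.mp ((⟨M + δ, fun ω => abs_le.mpr ⟨by linarith [(hclose ω).1, (abs_le.mp (hbX ω)).1],
      by linarith [(hclose ω).2, (abs_le.mp (hbX ω)).2]⟩⟩ : BddRV X').choose_spec ω)
    constructor <;> linarith [(hclose ω).1, (hclose ω).2, (abs_le.mp (hbX ω)).1,
      (abs_le.mp (hbX ω)).2]
  have hval : ∀ (ρ' : (Ω → ℝ) → ℝ), IsCash ρ' → IsMono ρ' → IsComAdd ρ' →
      ρ' X' = (∑ k : Fin K, δ * ρ' ((A k).indicator fun _ => (1:ℝ))) + (-M) := by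
    intro ρ' hc' hm' ha'
    rw [hX']
    rw [hc' S hSmeas hSbdd (-M)]
    congr 1
    exact rho_chain hc' hm' ha' K A hAmeas hchain (fun _ => δ) (fun _ => hδ.le)
  have heq : ρ₁ X' = ρ₂ X' := by
    rw [hval ρ₁ hc1 hm1 ha1, hval ρ₂ hc2 hm2 ha2]
    congr 1
    exact Finset.sum_congr rfl (fun k _ => by rw [hind (A k) (hAmeas k)])
  have habs : ∀ ω, |X ω - X' ω| ≤ δ := by
    intro ω
    rw [abs_le]
    exact ⟨by linarith [(hclose ω).2], by linarith [(hclose ω).1]⟩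
  have hd1 : |ρ₁ X - ρ₁ X'| ≤ δ :=
    rho_lip hc1 hm1 hX hX'meas ⟨M, hbX⟩ hX'bdd habs
  have hd2 : |ρ₂ X - ρ₂ X'| ≤ δ :=
    rho_lip hc2 hm2 hX hX'meas ⟨M, hbX⟩ hX'bdd habs
  have e1 := abs_le.mp hd1
  have e2 := abs_le.mp hd2
  rw [abs_le]
  constructor <;> linarith [heq]
end Rho


section Main
variable {Ω : Type*} [MeasurableSpace Ω]

lemma bdd_add_const {X : Ω → ℝ} (hb : BddRV X) (k : ℝ) : BddRV (fun ω => X ω + k) := by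
  obtain ⟨M, hM⟩ := hb
  exact ⟨M + |k|, fun ω => le_trans (abs_add_le _ _) (by linarith [hM ω])⟩

lemma bdd_add {X Y : Ω → ℝ} (hbX : BddRV X) (hbY : BddRV Y) : BddRV (fun ω => X ω + Y ω) := by
  obtain ⟨M, hM⟩ := hbX
  obtain ⟨N, hN⟩ := hbY
  exact ⟨M + N, fun ω => le_trans (abs_add_le _ _) (by linarith [hM ω, hN ω])⟩

end Main

theorem q_based_comonotonic_additive_characterization {Ω : Type*} [MeasurableSpace Ω]
    (n : ℕ) (hn : 0 < n) (Q : Fin n → Measure Ω) (hprob : ∀ i, IsProbabilityMeasure (Q i))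
    (ρ : (Ω → ℝ) → ℝ) :
    (((∀ X : Ω → ℝ, Measurable X → BddRV X → ∀ c : ℝ,
          ρ (fun ω => X ω + c) = ρ X + c) ∧
      (∀ X Y : Ω → ℝ, Measurable X → Measurable Y → BddRV X → BddRV Y →
          (∀ ω, X ω ≤ Y ω) → ρ X ≤ ρ Y) ∧
      (∀ X Y : Ω → ℝ, Measurable X → Measurable Y → BddRV X → BddRV Y →
          Comonotonic X Y → ρ (fun ω => X ω + Y ω) = ρ X + ρ Y) ∧
      (∀ X Y : Ω → ℝ, Measurable X → Measurable Y → BddRV X → BddRV Y →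
          (∀ i : Fin n, ∀ x : ℝ, Q i {ω | X ω ≤ x} = Q i {ω | Y ω ≤ x}) → ρ X = ρ Y))
      ↔
     (∃ ψ : (Fin n → ℝ) → ℝ,
        (∀ x, ψ x ∈ Set.Icc (0 : ℝ) 1) ∧
        ψ (fun i => (Q i (∅ : Set Ω)).toReal) = 0 ∧
        ψ (fun i => (Q i (Set.univ : Set Ω)).toReal) = 1 ∧
        (∀ A B : Set Ω, MeasurableSet A → MeasurableSet B → A ⊆ B →
            ψ (fun i => (Q i A).toReal) ≤ ψ (fun i => (Q i B).toReal)) ∧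
        (∀ X : Ω → ℝ, Measurable X → BddRV X →
            ρ X = choquet (fun A => ψ (fun i => (Q i A).toReal)) X))) := by
  constructor
  · rintro ⟨hcash, hmono, hadd, hqb⟩
    classical
    have hρc : IsCash ρ := hcash
    have hρm : IsMono ρ := hmono
    have hρa : IsComAdd ρ := hadd
    have hρ0 : ρ (fun _ : Ω => (0:ℝ)) = 0 := rho_zero hρa
    have hρ1 : ρ (fun _ : Ω => (1:ℝ)) = 1 := rho_const hρc hρa 1
    have hwd : ∀ A B : Set Ω, MeasurableSet A → MeasurableSet B →
        (fun i => (Q i A).toReal) = (fun i => (Q i B).toReal) →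
        ρ (A.indicator fun _ => (1:ℝ)) = ρ (B.indicator fun _ => (1:ℝ)) := by
      intro A B hA hB hvec
      apply hqb _ _ (measurable_const.indicator hA) (measurable_const.indicator hB)
        (bdd_indicator A 1) (bdd_indicator B 1)
      intro i x
      have hQi : Q i A = Q i B :=
        (ENNReal.toReal_eq_toReal_iff' (measure_ne_top _ _) (measure_ne_top _ _)).mp (congrFun hvec i)
      rcases lt_or_ge x 0 with hx | hx
      · have h1 : {ω | A.indicator (fun _ => (1:ℝ)) ω ≤ x} = ∅ := by
          apply eq_empty_iff_forall_notMem.mpr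
          intro ω
          simp only [mem_setOf_eq, not_le]
          by_cases h : ω ∈ A <;> simp [h] <;> linarith
        have h2 : {ω | B.indicator (fun _ => (1:ℝ)) ω ≤ x} = ∅ := by
          apply eq_empty_iff_forall_notMem.mpr
          intro ω
          simp only [mem_setOf_eq, not_le]
          by_cases h : ω ∈ B <;> simp [h] <;> linarith
        rw [h1, h2]
      rcases lt_or_ge x 1 with hx1 | hx1
      · have h1 : {ω | A.indicator (fun _ => (1:ℝ)) ω ≤ x} = Aᶜ := by
          ext ω
          simp only [mem_setOf_eq, mem_compl_iff]
          by_cases h : ω ∈ A <;> simp [h] <;> linarith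
        have h2 : {ω | B.indicator (fun _ => (1:ℝ)) ω ≤ x} = Bᶜ := by
          ext ω
          simp only [mem_setOf_eq, mem_compl_iff]
          by_cases h : ω ∈ B <;> simp [h] <;> linarith
        rw [h1, h2, measure_compl hA (measure_ne_top _ _),
          measure_compl hB (measure_ne_top _ _), hQi]
      · have h1 : {ω | A.indicator (fun _ => (1:ℝ)) ω ≤ x} = univ := by
          apply eq_univ_iff_forall.mpr
          intro ω
          simp only [mem_setOf_eq]
          by_cases h : ω ∈ A <;> simp [h] <;> linarith
        have h2 : {ω | B.indicator (fun _ => (1:ℝ)) ω ≤ x} = univ := by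
          apply eq_univ_iff_forall.mpr
          intro ω
          simp only [mem_setOf_eq]
          by_cases h : ω ∈ B <;> simp [h] <;> linarith
        rw [h1, h2]
    set ψ : (Fin n → ℝ) → ℝ := fun v =>
      if h : ∃ A : Set Ω, MeasurableSet A ∧ (fun i => (Q i A).toReal) = v then
        ρ (h.choose.indicator fun _ => (1:ℝ)) else 0 with hψ
    have hψA : ∀ A : Set Ω, MeasurableSet A →
        ψ (fun i => (Q i A).toReal) = ρ (A.indicator fun _ => (1:ℝ)) := by
      intro A hA
      have hex : ∃ B : Set Ω, MeasurableSet B ∧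
          (fun i => (Q i B).toReal) = (fun i => (Q i A).toReal) := ⟨A, hA, rfl⟩
      rw [hψ]
      simp only [dif_pos hex]
      exact hwd _ _ hex.choose_spec.1 hA hex.choose_spec.2
    have hind01 : ∀ A : Set Ω, MeasurableSet A →
        0 ≤ ρ (A.indicator fun _ => (1:ℝ)) ∧ ρ (A.indicator fun _ => (1:ℝ)) ≤ 1 := by
      intro A hA
      constructor
      · have h := hmono (fun _ => (0:ℝ)) (A.indicator fun _ => (1:ℝ)) measurable_const
          (measurable_const.indicator hA) (bdd_const 0) (bdd_indicator A 1)
          (fun ω => by by_cases h : ω ∈ A <;> simp [h])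
        rw [hρ0] at h
        exact h
      · have h := hmono (A.indicator fun _ => (1:ℝ)) (fun _ => (1:ℝ))
          (measurable_const.indicator hA) measurable_const (bdd_indicator A 1) (bdd_const 1)
          (fun ω => by by_cases h : ω ∈ A <;> simp [h])
        rw [hρ1] at h
        exact h
    have hrange : ∀ v, ψ v ∈ Set.Icc (0:ℝ) 1 := by
      intro v
      rw [hψ]
      by_cases hex : ∃ A : Set Ω, MeasurableSet A ∧ (fun i => (Q i A).toReal) = v
      · simp only [dif_pos hex]
        exact ⟨(hind01 _ hex.choose_spec.1).1, (hind01 _ hex.choose_spec.1).2⟩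
      · simp only [dif_neg hex]
        exact ⟨le_rfl, zero_le_one⟩
    have hcap : CapGood (fun A : Set Ω => ψ (fun i => (Q i A).toReal)) :=
      { nonneg := fun A => (hrange _).1
        le_one := fun A => (hrange _).2
        empty := by
          rw [hψA ∅ MeasurableSet.empty, Set.indicator_empty]
          exact hρ0
        univ := by
          rw [hψA univ MeasurableSet.univ, Set.indicator_univ]
          exact hρ1
        mono := fun A B hA hB hAB => by
          rw [hψA A hA, hψA B hB]
          exact hmono _ _ (measurable_const.indicator hA) (measurable_const.indicator hB)
            (bdd_indicator A 1) (bdd_indicator B 1)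
            (fun ω => Set.indicator_le_indicator_of_subset hAB (fun _ => zero_le_one) ω) }
    refine ⟨ψ, hrange, hcap.empty, hcap.univ, hcap.mono, ?_⟩
    intro X hXm hXb
    refine uniq hρc hρm hρa
      (fun Y hY hb k => A_cash hcap hY hb k)
      (fun Y Z hY hZ hbY hbZ hle => A_mono hcap hY hZ hbY hbZ hle)
      (fun Y Z hY hZ hbY hbZ hco => A_comono hcap hY hZ hbY hbZ hco)
      ?_ hXm hXb
    intro A hA
    rw [choquet_indicator hcap hA, hψA A hA]
  · rintro ⟨ψ, hrange, hempty, huniv, hmono', hrep⟩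
    have hcap : CapGood (fun A : Set Ω => ψ (fun i => (Q i A).toReal)) :=
      { nonneg := fun A => (hrange _).1
        le_one := fun A => (hrange _).2
        empty := hempty
        univ := huniv
        mono := hmono' }
    refine ⟨?_, ?_, ?_, ?_⟩
    · intro X hX hb k
      rw [hrep X hX hb, hrep (fun ω => X ω + k) (hX.add_const k) (bdd_add_const hb k)]
      exact A_cash hcap hX hb k
    · intro X Y hX hY hbX hbY hle
      rw [hrep X hX hbX, hrep Y hY hbY]
      exact A_mono hcap hX hY hbX hbY hle
    · intro X Y hX hY hbX hbY hco
      rw [hrep X hX hbX, hrep Y hY hbY,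
        hrep (fun ω => X ω + Y ω) (hX.add hY) (bdd_add hbX hbY)]
      exact A_comono hcap hX hY hbX hbY hco
    · intro X Y hX hY hbX hbY hdist
      rw [hrep X hX hbX, hrep Y hY hbY]
      exact A_qbased Q hprob ψ hX hY hdist
end

section
/- For random variables Z ≥ 0 and Y on a probability space (Ω, F, Q), the Hardy–Littlewood inequality holds: E^Q[ZY] ≤ ∫_0^1 F^{-1}_{Z,Q}(u) F^{-1}_{Y,Q}(u) du, with equality when Y = F^{-1}_{Y,Q}(U) and Z = F^{-1}_{Z,Q}(U) for a common uniform U. -/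
set_option linter.unusedSectionVars false
set_option linter.unusedVariables false
open MeasureTheory Set

noncomputable def quantile {Ω : Type*} [MeasurableSpace Ω] (Q : Measure Ω) (W : Ω → ℝ)
    (u : ℝ) : ℝ :=
  sInf {x : ℝ | u ≤ (Q {ω | W ω ≤ x}).toReal}

namespace HL

variable {Ω : Type*} [MeasurableSpace Ω] (Q : Measure Ω) [IsProbabilityMeasure Q]

/-- the cdf -/
noncomputable def cdf (W : Ω → ℝ) (x : ℝ) : ℝ := (Q {ω | W ω ≤ x}).toReal

variable {Q}

lemma cdf_mono {W : Ω → ℝ} : Monotone (cdf Q W) := by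
  intro a b hab
  exact ENNReal.toReal_mono (measure_ne_top _ _)
    (measure_mono (fun ω (h : W ω ≤ a) => h.trans hab))

lemma cdf_nonneg {W : Ω → ℝ} (x : ℝ) : 0 ≤ cdf Q W x := ENNReal.toReal_nonneg

lemma cdf_le_one {W : Ω → ℝ} (x : ℝ) : cdf Q W x ≤ 1 := by
  have := measure_mono (μ := Q) (subset_univ {ω | W ω ≤ x})
  simpa [cdf] using ENNReal.toReal_mono (by simp) this

lemma ofReal_cdf {W : Ω → ℝ} (hW : Measurable W) (x : ℝ) :
    ENNReal.ofReal (cdf Q W x) = Q {ω | W ω ≤ x} := by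
  simp [cdf, ENNReal.ofReal_toReal (measure_ne_top _ _)]

/-- quantile set nonempty for u < 1 -/
lemma quantile_set_nonempty {W : Ω → ℝ} (hW : Measurable W) {u : ℝ} (hu : u < 1) :
    {x : ℝ | u ≤ cdf Q W x}.Nonempty := by
  have h1 : Filter.Tendsto (fun n : ℕ => Q {ω | W ω ≤ (n : ℝ)}) Filter.atTop (nhds (Q univ)) := by
    have : ⋃ n : ℕ, {ω | W ω ≤ (n : ℝ)} = univ := by
      ext ω; simp only [mem_iUnion, mem_setOf_eq, mem_univ, iff_true]
      obtain ⟨n, hn⟩ := exists_nat_ge (W ω); exact ⟨n, hn⟩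
    rw [← this]
    apply tendsto_measure_iUnion_atTop
    intro a b hab ω (h : W ω ≤ a); exact h.trans (by exact_mod_cast hab)
  have h2 : Filter.Tendsto (fun n : ℕ => cdf Q W (n : ℝ)) Filter.atTop (nhds 1) := by
    have := (ENNReal.tendsto_toReal (by simp : Q univ ≠ ⊤)).comp h1
    simpa [cdf, Function.comp_def] using this
  obtain ⟨n, hn⟩ := (h2.eventually (eventually_gt_nhds hu)).exists
  exact ⟨n, hn.le⟩

/-- right-continuity consequence -/
lemma le_cdf_of_forall_gt {W : Ω → ℝ} (hW : Measurable W) {u q : ℝ}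
    (h : ∀ x, q < x → u ≤ cdf Q W x) : u ≤ cdf Q W q := by
  have hset : ⋂ n : ℕ, {ω | W ω ≤ q + 1 / (n + 1)} = {ω | W ω ≤ q} := by
    ext ω
    simp only [mem_iInter, mem_setOf_eq]
    constructor
    · intro h'
      refine le_of_forall_pos_le_add (fun ε hε => ?_)
      obtain ⟨n, hn⟩ := exists_nat_one_div_lt hε
      exact (h' n).trans (by linarith)
    · intro h' n
      have : (0:ℝ) < 1 / (n + 1) := by positivity
      linarith
  have hmono : Antitone (fun n : ℕ => {ω | W ω ≤ q + 1 / (n + 1)}) := by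
    intro a b hab ω (h' : W ω ≤ q + 1 / (b + 1))
    have hab' : (a:ℝ) ≤ b := Nat.cast_le.mpr hab
    have : (1:ℝ) / (b + 1) ≤ 1 / (a + 1) := by
      apply one_div_le_one_div_of_le (by positivity); linarith
    exact h'.trans (by linarith)
  have htend : Filter.Tendsto (fun n : ℕ => Q {ω | W ω ≤ q + 1 / (n + 1)})
      Filter.atTop (nhds (Q {ω | W ω ≤ q})) := by
    rw [← hset]
    exact tendsto_measure_iInter_atTop (fun n => (hW measurableSet_Iic).nullMeasurableSet) hmono
      ⟨0, measure_ne_top _ _⟩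
  have htend' : Filter.Tendsto (fun n : ℕ => cdf Q W (q + 1 / (n + 1)))
      Filter.atTop (nhds (cdf Q W q)) :=
    (ENNReal.tendsto_toReal (measure_ne_top _ _)).comp htend
  refine ge_of_tendsto htend' (Filter.Eventually.of_forall (fun n => h _ ?_))
  have : (0:ℝ) < 1 / (n + 1) := by positivity
  linarith


lemma bddBelow_quantile_set {W : Ω → ℝ} {c : ℝ} (hlb : ∀ ω, c ≤ W ω) {u : ℝ} (hu : 0 < u) :
    BddBelow {x : ℝ | u ≤ cdf Q W x} := by
  refine ⟨c - 1, fun y hy => ?_⟩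
  by_contra hyc
  push_neg at hyc
  have : {ω | W ω ≤ y} = ∅ := by
    ext ω; simp only [mem_setOf_eq, mem_empty_iff_false, iff_false]
    have := hlb ω; intro h; linarith
  have : cdf Q W y = 0 := by simp [cdf, this]
  rw [mem_setOf_eq, this] at hy
  linarith

lemma le_cdf_quantile {W : Ω → ℝ} (hW : Measurable W) {c : ℝ} (hlb : ∀ ω, c ≤ W ω)
    {u : ℝ} (hu : 0 < u) (hu1 : u < 1) : u ≤ cdf Q W (quantile Q W u) := by
  apply le_cdf_of_forall_gt hW
  intro x hx
  obtain ⟨y, hyS, hyx⟩ := exists_lt_of_csInf_lt (quantile_set_nonempty hW hu1) hx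
  exact le_trans hyS (cdf_mono hyx.le)

/-- Key galois property -/
lemma quantile_le_iff {W : Ω → ℝ} (hW : Measurable W) {c : ℝ} (hlb : ∀ ω, c ≤ W ω)
    {u : ℝ} (hu : 0 < u) (hu1 : u < 1) (x : ℝ) :
    quantile Q W u ≤ x ↔ u ≤ cdf Q W x := by
  constructor
  · intro h
    exact (le_cdf_quantile hW hlb hu hu1).trans (cdf_mono h)
  · intro h
    exact csInf_le (bddBelow_quantile_set hlb hu) h

lemma lt_quantile_iff {W : Ω → ℝ} (hW : Measurable W) {c : ℝ} (hlb : ∀ ω, c ≤ W ω)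
    {u : ℝ} (hu : 0 < u) (hu1 : u < 1) (x : ℝ) :
    x < quantile Q W u ↔ cdf Q W x < u := by
  rw [← not_le, ← not_le, quantile_le_iff hW hlb hu hu1]

lemma quantile_nonneg {W : Ω → ℝ} (hW : Measurable W) (hlb : ∀ ω, 0 ≤ W ω)
    {u : ℝ} (hu : 0 < u) (hu1 : u < 1) :
    0 ≤ quantile Q W u := by
  apply le_csInf (quantile_set_nonempty hW hu1)
  · intro y hy
    by_contra hy0
    push_neg at hy0
    have : {ω | W ω ≤ y} = ∅ := by
      ext ω; simp only [mem_setOf_eq, mem_empty_iff_false, iff_false]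
      have := hlb ω; intro h; linarith
    have hy' : u ≤ (Q {ω | W ω ≤ y}).toReal := hy
    rw [this] at hy'
    simp at hy'
    linarith

lemma quantile_le_of_le {W : Ω → ℝ} {c b : ℝ} (hlb : ∀ ω, c ≤ W ω) (hub : ∀ ω, W ω ≤ b)
    {u : ℝ} (hu0 : 0 < u) (hu : u ≤ 1) :
    quantile Q W u ≤ b := by
  apply csInf_le (bddBelow_quantile_set hlb hu0)
  · show u ≤ cdf Q W b
    have : {ω | W ω ≤ b} = univ := by ext ω; simpa using hub ω
    simp [cdf, this, hu]

lemma monotoneOn_quantile {W : Ω → ℝ} (hW : Measurable W) {c : ℝ} (hlb : ∀ ω, c ≤ W ω) :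
    MonotoneOn (quantile Q W) (Ioo (0:ℝ) 1) := by
  intro a ha b hb hab
  apply csInf_le_csInf (bddBelow_quantile_set hlb ha.1) (quantile_set_nonempty hW hb.2)
  intro x hx
  exact le_trans hab hx


lemma quantile_shift {W : Ω → ℝ} (hW : Measurable W) {c : ℝ} (hlb : ∀ ω, c ≤ W ω) (M : ℝ)
    {u : ℝ} (hu : 0 < u) (hu1 : u < 1) :
    quantile Q (fun ω => W ω + M) u = quantile Q W u + M := by
  have hcdf : ∀ x, cdf Q (fun ω => W ω + M) x = cdf Q W (x - M) := by
    intro x; unfold cdf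
    congr 1; congr 1
    ext ω; simp only [mem_setOf_eq]; constructor <;> intro h <;> linarith
  have hSne : {x : ℝ | u ≤ cdf Q W x}.Nonempty := quantile_set_nonempty hW hu1
  have hSbdd : BddBelow {x : ℝ | u ≤ cdf Q W x} := bddBelow_quantile_set hlb hu
  have hTmem : ∀ x, (u ≤ cdf Q (fun ω => W ω + M) x) ↔ (x - M ∈ {x : ℝ | u ≤ cdf Q W x}) := by
    intro x; rw [hcdf]; rfl
  have hglb : IsGLB {x : ℝ | u ≤ cdf Q (fun ω => W ω + M) x} (quantile Q W u + M) := by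
    constructor
    · intro x hx
      have : x - M ∈ {x : ℝ | u ≤ cdf Q W x} := (hTmem x).mp hx
      have := csInf_le hSbdd this
      have : quantile Q W u ≤ x - M := this
      linarith
    · intro b hb
      have hblb : b - M ∈ lowerBounds {x : ℝ | u ≤ cdf Q W x} := by
        intro y hy
        have : y + M ∈ {x : ℝ | u ≤ cdf Q (fun ω => W ω + M) x} := by
          rw [mem_setOf_eq, hTmem]; simpa using hy
        have := hb this; linarith
      have : b - M ≤ quantile Q W u := le_csInf hSne hblb
      linarith
  have hTne : {x : ℝ | u ≤ cdf Q (fun ω => W ω + M) x}.Nonempty := by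
    obtain ⟨y, hy⟩ := hSne
    exact ⟨y + M, by rw [mem_setOf_eq, hTmem]; simpa using hy⟩
  exact hglb.csInf_eq hTne

lemma volume_quantile_gt {W : Ω → ℝ} (hW : Measurable W) {c : ℝ} (hlb : ∀ ω, c ≤ W ω)
    {s : ℝ} (hs : 0 ≤ s) :
    volume.restrict (Ioo (0:ℝ) 1) {u | s < quantile Q W u} = Q {ω | s < W ω} := by
  rw [Measure.restrict_apply' measurableSet_Ioo]
  have hset : {u | s < quantile Q W u} ∩ Ioo (0:ℝ) 1 = Ioo (cdf Q W s) 1 := by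
    ext u
    simp only [mem_inter_iff, mem_setOf_eq, mem_Ioo]
    constructor
    · rintro ⟨h1, h2, h3⟩
      exact ⟨(lt_quantile_iff hW hlb h2 h3 s).mp h1, h3⟩
    · rintro ⟨h1, h2⟩
      have h0 : 0 < u := lt_of_le_of_lt (cdf_nonneg s) h1
      exact ⟨(lt_quantile_iff hW hlb h0 h2 s).mpr h1, h0, h2⟩
  rw [hset, Real.volume_Ioo]
  have hcompl : {ω | s < W ω} = {ω | W ω ≤ s}ᶜ := by
    ext ω; simp [not_le]
  rw [hcompl, measure_compl (show MeasurableSet {ω | W ω ≤ s} from hW measurableSet_Iic)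
    (measure_ne_top _ _)]
  rw [measure_univ, ← ofReal_cdf hW s, ← ENNReal.ofReal_one,
    ← ENNReal.ofReal_sub _ (cdf_nonneg s)]

lemma aemeasurable_quantile {W : Ω → ℝ} (hW : Measurable W) {c : ℝ} (hlb : ∀ ω, c ≤ W ω) :
    AEMeasurable (quantile Q W) (volume.restrict (Ioo (0:ℝ) 1)) :=
  aemeasurable_restrict_of_monotoneOn measurableSet_Ioo (monotoneOn_quantile hW hlb)

lemma map_quantile {W : Ω → ℝ} (hW : Measurable W) {c : ℝ} (hlb : ∀ ω, c ≤ W ω) :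
    (volume.restrict (Ioo (0:ℝ) 1)).map (quantile Q W) = Q.map W := by
  haveI : IsProbabilityMeasure ((volume.restrict (Ioo (0:ℝ) 1)).map (quantile Q W)) := by
    constructor
    rw [Measure.map_apply_of_aemeasurable (aemeasurable_quantile hW hlb) MeasurableSet.univ]
    simp
  haveI : IsProbabilityMeasure (Q.map W) := Measure.isProbabilityMeasure_map hW.aemeasurable
  apply Measure.ext_of_Iic
  intro x
  rw [Measure.map_apply_of_aemeasurable (aemeasurable_quantile hW hlb) measurableSet_Iic,
    Measure.map_apply hW measurableSet_Iic]
  rw [Measure.restrict_apply' measurableSet_Ioo,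
    show W ⁻¹' Iic x = {ω | W ω ≤ x} from rfl]
  rcases le_or_gt 1 (cdf Q W x) with h1 | h1
  · have hc1 : cdf Q W x = 1 := le_antisymm (cdf_le_one x) h1
    have hset : quantile Q W ⁻¹' Iic x ∩ Ioo (0:ℝ) 1 = Ioo 0 1 := by
      apply inter_eq_right.mpr
      intro u hu
      have := (quantile_le_iff hW hlb hu.1 hu.2 x).mpr (by rw [hc1]; exact hu.2.le)
      exact this
    rw [hset, Real.volume_Ioo, ← ofReal_cdf hW x, hc1]
    simp
  · have hset : quantile Q W ⁻¹' Iic x ∩ Ioo (0:ℝ) 1 = Ioc 0 (cdf Q W x) := by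
      ext u
      simp only [mem_inter_iff, mem_preimage, mem_Iic, mem_Ioo, mem_Ioc]
      constructor
      · rintro ⟨h2, h3, h4⟩
        exact ⟨h3, (quantile_le_iff hW hlb h3 h4 x).mp h2⟩
      · rintro ⟨h2, h3⟩
        have h4 : u < 1 := lt_of_le_of_lt h3 h1
        exact ⟨(quantile_le_iff hW hlb h2 h4 x).mpr h3, h2, h4⟩
    rw [hset, Real.volume_Ioc, ← ofReal_cdf hW x]
    simp


lemma layer2 {α : Type*} [MeasurableSpace α] (μ : Measure α) {f g : α → ℝ}
    (hf : Measurable f) (hg : Measurable g) (hf0 : ∀ a, 0 ≤ f a) (hg0 : ∀ a, 0 ≤ g a) :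
    ∫⁻ a, ENNReal.ofReal (f a) * ENNReal.ofReal (g a) ∂μ
      = ∫⁻ s in Ioi (0:ℝ), ∫⁻ t in Ioi (0:ℝ), μ ({a | s < f a} ∩ {a | t < g a}) := by
  have hgm : Measurable (fun a => ENNReal.ofReal (g a)) := hg.ennreal_ofReal
  calc ∫⁻ a, ENNReal.ofReal (f a) * ENNReal.ofReal (g a) ∂μ
      = ∫⁻ a, ENNReal.ofReal (f a) ∂(μ.withDensity (fun a => ENNReal.ofReal (g a))) := by
        rw [lintegral_withDensity_eq_lintegral_mul _ hgm hf.ennreal_ofReal]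
        congr 1; ext a; exact mul_comm _ _
    _ = ∫⁻ s in Ioi (0:ℝ),
          (μ.withDensity (fun a => ENNReal.ofReal (g a))) {a | s < f a} :=
        lintegral_eq_lintegral_meas_lt _ (Filter.Eventually.of_forall hf0) hf.aemeasurable
    _ = ∫⁻ s in Ioi (0:ℝ), ∫⁻ a in {a | s < f a}, ENNReal.ofReal (g a) ∂μ := by
        apply lintegral_congr
        intro s
        rw [withDensity_apply _ (measurableSet_lt measurable_const hf)]
    _ = ∫⁻ s in Ioi (0:ℝ), ∫⁻ t in Ioi (0:ℝ), (μ.restrict {a | s < f a}) {a | t < g a} := by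
        apply lintegral_congr
        intro s
        exact lintegral_eq_lintegral_meas_lt _ (Filter.Eventually.of_forall hg0) hg.aemeasurable
    _ = ∫⁻ s in Ioi (0:ℝ), ∫⁻ t in Ioi (0:ℝ), μ ({a | s < f a} ∩ {a | t < g a}) := by
        apply lintegral_congr; intro s
        apply lintegral_congr; intro t
        rw [Measure.restrict_apply (measurableSet_lt measurable_const hg), inter_comm]

lemma integral_mul_eq_toReal {α : Type*} [MeasurableSpace α] (μ : Measure α) {f g : α → ℝ}
    (hf : AEMeasurable f μ) (hg : AEMeasurable g μ)
    (hf0 : 0 ≤ᵐ[μ] f) (hg0 : 0 ≤ᵐ[μ] g) :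
    ∫ a, f a * g a ∂μ = (∫⁻ a, ENNReal.ofReal (f a) * ENNReal.ofReal (g a) ∂μ).toReal := by
  rw [integral_eq_lintegral_of_nonneg_ae]
  · congr 1
    apply lintegral_congr_ae
    filter_upwards [hf0] with a ha
    rw [ENNReal.ofReal_mul ha]
  · filter_upwards [hf0, hg0] with a h1 h2
    exact mul_nonneg h1 h2
  · exact (hf.mul hg).aestronglyMeasurable


lemma meas_gt_eq {W : Ω → ℝ} (hW : Measurable W) (s : ℝ) :
    Q {ω | s < W ω} = ENNReal.ofReal (1 - cdf Q W s) := by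
  have hcompl : {ω | s < W ω} = {ω | W ω ≤ s}ᶜ := by ext ω; simp [not_le]
  rw [hcompl, measure_compl (show MeasurableSet {ω | W ω ≤ s} from hW measurableSet_Iic)
    (measure_ne_top _ _), measure_univ, ← ofReal_cdf hW s, ← ENNReal.ofReal_one,
    ← ENNReal.ofReal_sub _ (cdf_nonneg s)]

lemma volume_quantile_gt2 {V W : Ω → ℝ} (hV : Measurable V) (hW : Measurable W)
    (hlbV : ∀ ω, 0 ≤ V ω) (hlbW : ∀ ω, 0 ≤ W ω) (s t : ℝ) :
    volume.restrict (Ioo (0:ℝ) 1) ({u | s < quantile Q V u} ∩ {u | t < quantile Q W u})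
      = min (Q {ω | s < V ω}) (Q {ω | t < W ω}) := by
  rw [Measure.restrict_apply' measurableSet_Ioo]
  have hset : ({u | s < quantile Q V u} ∩ {u | t < quantile Q W u}) ∩ Ioo (0:ℝ) 1
      = Ioo (max (cdf Q V s) (cdf Q W t)) 1 := by
    ext u
    simp only [mem_inter_iff, mem_setOf_eq, mem_Ioo, max_lt_iff]
    constructor
    · rintro ⟨⟨h1, h2⟩, h3, h4⟩
      exact ⟨⟨(lt_quantile_iff hV hlbV h3 h4 s).mp h1,
        (lt_quantile_iff hW hlbW h3 h4 t).mp h2⟩, h4⟩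
    · rintro ⟨⟨h1, h2⟩, h4⟩
      have h3 : 0 < u := lt_of_le_of_lt (cdf_nonneg s) h1
      exact ⟨⟨(lt_quantile_iff hV hlbV h3 h4 s).mpr h1,
        (lt_quantile_iff hW hlbW h3 h4 t).mpr h2⟩, h3, h4⟩
  rw [hset, Real.volume_Ioo, meas_gt_eq hV, meas_gt_eq hW]
  rcases le_total (cdf Q V s) (cdf Q W t) with h | h
  · rw [max_eq_right h, min_eq_right (ENNReal.ofReal_le_ofReal (by linarith))]
  · rw [max_eq_left h, min_eq_left (ENNReal.ofReal_le_ofReal (by linarith))]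

lemma integrable_quantile {W : Ω → ℝ} (hW : Measurable W) {c : ℝ} (hlb : ∀ ω, c ≤ W ω)
    (hWint : Integrable W Q) :
    Integrable (quantile Q W) (volume.restrict (Ioo (0:ℝ) 1)) := by
  have h1 : Integrable (id : ℝ → ℝ) (Q.map W) := by
    rw [integrable_map_measure aestronglyMeasurable_id hW.aemeasurable]
    exact hWint
  rw [← map_quantile hW hlb] at h1
  rw [integrable_map_measure aestronglyMeasurable_id (aemeasurable_quantile hW hlb)] at h1
  exact h1

lemma integral_quantile_eq {W : Ω → ℝ} (hW : Measurable W) {c : ℝ} (hlb : ∀ ω, c ≤ W ω) :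
    ∫ u in Ioo (0:ℝ) 1, quantile Q W u = ∫ ω, W ω ∂Q := by
  have h1 : ∫ x, x ∂((volume.restrict (Ioo (0:ℝ) 1)).map (quantile Q W))
      = ∫ u in Ioo (0:ℝ) 1, quantile Q W u :=
    integral_map (aemeasurable_quantile hW hlb) aestronglyMeasurable_id
  have h2 : ∫ x, x ∂(Q.map W) = ∫ ω, W ω ∂Q :=
    integral_map hW.aemeasurable aestronglyMeasurable_id
  rw [← h1, ← h2, map_quantile hW hlb]

lemma lintegral_ofReal_quantile {W : Ω → ℝ} (hW : Measurable W) {c : ℝ} (hlb : ∀ ω, c ≤ W ω) :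
    ∫⁻ u in Ioo (0:ℝ) 1, ENNReal.ofReal (quantile Q W u) = ∫⁻ ω, ENNReal.ofReal (W ω) ∂Q := by
  have h1 : ∫⁻ x, ENNReal.ofReal x ∂((volume.restrict (Ioo (0:ℝ) 1)).map (quantile Q W))
      = ∫⁻ u in Ioo (0:ℝ) 1, ENNReal.ofReal (quantile Q W u) :=
    lintegral_map' aemeasurable_id.ennreal_ofReal (aemeasurable_quantile hW hlb)
  have h2 : ∫⁻ x, ENNReal.ofReal x ∂(Q.map W) = ∫⁻ ω, ENNReal.ofReal (W ω) ∂Q :=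
    lintegral_map' aemeasurable_id.ennreal_ofReal hW.aemeasurable
  rw [← h1, ← h2, map_quantile hW hlb]


/-- key inequality for nonnegative Z and nonnegative bounded Y -/
lemma core_ineq {Z Y : Ω → ℝ} (hZm : Measurable Z) (hYm : Measurable Y)
    (hZ0 : ∀ ω, 0 ≤ Z ω) (hY0 : ∀ ω, 0 ≤ Y ω) {b : ℝ} (hYb : ∀ ω, Y ω ≤ b)
    (hZint : Integrable Z Q) :
    ∫ ω, Z ω * Y ω ∂Q ≤ ∫ u in Ioo (0:ℝ) 1, quantile Q Z u * quantile Q Y u := by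
  set lam := volume.restrict (Ioo (0:ℝ) 1) with hlam
  have hqZm : AEMeasurable (quantile Q Z) lam := aemeasurable_quantile hZm hZ0
  have hqYm : AEMeasurable (quantile Q Y) lam := aemeasurable_quantile hYm hY0
  -- nonneg a.e.
  have hqZ0 : 0 ≤ᵐ[lam] quantile Q Z := by
    filter_upwards [self_mem_ae_restrict measurableSet_Ioo] with u hu
    exact quantile_nonneg hZm hZ0 hu.1 hu.2
  have hqY0 : 0 ≤ᵐ[lam] quantile Q Y := by
    filter_upwards [self_mem_ae_restrict measurableSet_Ioo] with u hu
    exact quantile_nonneg hYm hY0 hu.1 hu.2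
  -- measurable nonneg modifications
  set fZ : ℝ → ℝ := fun u => max (hqZm.mk _ u) 0 with hfZ
  set fY : ℝ → ℝ := fun u => max (hqYm.mk _ u) 0 with hfY
  have hfZm : Measurable fZ := hqZm.measurable_mk.max measurable_const
  have hfYm : Measurable fY := hqYm.measurable_mk.max measurable_const
  have hfZ0 : ∀ u, 0 ≤ fZ u := fun u => le_max_right _ _
  have hfY0 : ∀ u, 0 ≤ fY u := fun u => le_max_right _ _
  have heZ : quantile Q Z =ᵐ[lam] fZ := by
    filter_upwards [hqZm.ae_eq_mk, hqZ0] with u h1 h2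
    rw [hfZ]; simp only [← h1]; exact (max_eq_left h2).symm
  have heY : quantile Q Y =ᵐ[lam] fY := by
    filter_upwards [hqYm.ae_eq_mk, hqY0] with u h1 h2
    rw [hfY]; simp only [← h1]; exact (max_eq_left h2).symm
  -- lintegral identities
  have E1 : ∫⁻ ω, ENNReal.ofReal (Z ω) * ENNReal.ofReal (Y ω) ∂Q
      = ∫⁻ s in Ioi (0:ℝ), ∫⁻ t in Ioi (0:ℝ), Q ({ω | s < Z ω} ∩ {ω | t < Y ω}) :=
    layer2 Q hZm hYm hZ0 hY0
  have E2 : ∫⁻ u, ENNReal.ofReal (quantile Q Z u) * ENNReal.ofReal (quantile Q Y u) ∂lam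
      = ∫⁻ s in Ioi (0:ℝ), ∫⁻ t in Ioi (0:ℝ), lam ({u | s < fZ u} ∩ {u | t < fY u}) := by
    rw [← layer2 lam hfZm hfYm hfZ0 hfY0]
    apply lintegral_congr_ae
    filter_upwards [heZ, heY] with u h1 h2
    rw [h1, h2]
  have E3 : ∀ s t : ℝ, lam ({u | s < fZ u} ∩ {u | t < fY u})
      = lam ({u | s < quantile Q Z u} ∩ {u | t < quantile Q Y u}) := by
    intro s t
    apply measure_congr
    apply Filter.eventuallyEq_set.mpr
    filter_upwards [heZ, heY] with u h1 h2
    simp only [mem_inter_iff, mem_setOf_eq, h1, h2]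
  -- comparison
  have hcomp : ∫⁻ s in Ioi (0:ℝ), ∫⁻ t in Ioi (0:ℝ), Q ({ω | s < Z ω} ∩ {ω | t < Y ω})
      ≤ ∫⁻ s in Ioi (0:ℝ), ∫⁻ t in Ioi (0:ℝ), lam ({u | s < fZ u} ∩ {u | t < fY u}) := by
    apply lintegral_mono
    intro s
    apply lintegral_mono
    intro t
    dsimp only
    rw [E3 s t, hlam, volume_quantile_gt2 hZm hYm hZ0 hY0 s t]
    exact le_min (measure_mono inter_subset_left) (measure_mono inter_subset_right)
  have hle : ∫⁻ ω, ENNReal.ofReal (Z ω) * ENNReal.ofReal (Y ω) ∂Q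
      ≤ ∫⁻ u, ENNReal.ofReal (quantile Q Z u) * ENNReal.ofReal (quantile Q Y u) ∂lam := by
    rw [E1, E2]; exact hcomp
  -- finiteness of RHS
  have hb0 : 0 ≤ b := le_trans (hY0 (Classical.choice (by
    have : Q univ = 1 := measure_univ
    by_contra h
    rw [not_nonempty_iff] at h
    have : Q univ = 0 := by simp [univ_eq_empty_iff.mpr ⟨fun ω => (h.false ω)⟩]
    simp_all))) (hYb _)
  have hZfin : ∫⁻ ω, ENNReal.ofReal (Z ω) ∂Q ≠ ⊤ := by
    have h := hZint.hasFiniteIntegral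
    rw [hasFiniteIntegral_iff_norm] at h
    have : ∫⁻ ω, ENNReal.ofReal (Z ω) ∂Q = ∫⁻ ω, ENNReal.ofReal ‖Z ω‖ ∂Q := by
      apply lintegral_congr; intro ω; rw [Real.norm_of_nonneg (hZ0 ω)]
    rw [this]; exact h.ne
  have hfin : ∫⁻ u, ENNReal.ofReal (quantile Q Z u) * ENNReal.ofReal (quantile Q Y u) ∂lam ≠ ⊤ := by
    have hstep : ∫⁻ u, ENNReal.ofReal (quantile Q Z u) * ENNReal.ofReal (quantile Q Y u) ∂lam
        ≤ ∫⁻ u, ENNReal.ofReal b * ENNReal.ofReal (quantile Q Z u) ∂lam := by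
      apply lintegral_mono_ae
      filter_upwards [self_mem_ae_restrict measurableSet_Ioo] with u hu
      rw [mul_comm]
      exact mul_le_mul_left (ENNReal.ofReal_le_ofReal
        (quantile_le_of_le hY0 hYb hu.1 hu.2.le)) _
    have hconst : ∫⁻ u, ENNReal.ofReal b * ENNReal.ofReal (quantile Q Z u) ∂lam
        = ENNReal.ofReal b * ∫⁻ u, ENNReal.ofReal (quantile Q Z u) ∂lam :=
      lintegral_const_mul'' _ hqZm.ennreal_ofReal
    refine ne_top_of_le_ne_top ?_ hstep
    rw [hconst, hlam, lintegral_ofReal_quantile hZm hZ0]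
    exact ENNReal.mul_ne_top ENNReal.ofReal_ne_top hZfin
  -- convert
  have C1 : ∫ ω, Z ω * Y ω ∂Q
      = (∫⁻ ω, ENNReal.ofReal (Z ω) * ENNReal.ofReal (Y ω) ∂Q).toReal :=
    integral_mul_eq_toReal Q hZm.aemeasurable hYm.aemeasurable
      (Filter.Eventually.of_forall hZ0) (Filter.Eventually.of_forall hY0)
  have C2 : ∫ u in Ioo (0:ℝ) 1, quantile Q Z u * quantile Q Y u
      = (∫⁻ u, ENNReal.ofReal (quantile Q Z u) * ENNReal.ofReal (quantile Q Y u) ∂lam).toReal :=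
    integral_mul_eq_toReal lam hqZm hqYm hqZ0 hqY0
  rw [C1, C2]
  exact ENNReal.toReal_mono hfin hle


lemma le_quantile {W : Ω → ℝ} (hW : Measurable W) {c : ℝ} (hlb : ∀ ω, c ≤ W ω)
    {u : ℝ} (hu : 0 < u) (hu1 : u < 1) : c ≤ quantile Q W u := by
  apply le_csInf (quantile_set_nonempty hW hu1)
  intro y hy
  by_contra hyc
  push_neg at hyc
  have hempty : {ω | W ω ≤ y} = ∅ := by
    ext ω; simp only [mem_setOf_eq, mem_empty_iff_false, iff_false]
    have := hlb ω; intro h; linarith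
  have hy' : u ≤ (Q {ω | W ω ≤ y}).toReal := hy
  rw [hempty] at hy'
  simp at hy'
  linarith

end HL

theorem hardy_littlewood_inequality {Ω : Type*} [MeasurableSpace Ω]
    (Q : Measure Ω) [IsProbabilityMeasure Q]
    (Z Y : Ω → ℝ) (hZm : Measurable Z) (hYm : Measurable Y)
    (hZpos : ∀ ω, 0 ≤ Z ω) (hZint : Integrable Z Q)
    (hYb : ∃ M, ∀ ω, |Y ω| ≤ M) :
    (∫ ω, Z ω * Y ω ∂Q ≤ ∫ u in (0:ℝ)..1, quantile Q Z u * quantile Q Y u) ∧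
    (∀ U : Ω → ℝ, Measurable U →
      (∀ t ∈ Set.Icc (0:ℝ) 1, Q {ω | U ω ≤ t} = ENNReal.ofReal t) →
      (∀ ω, Y ω = quantile Q Y (U ω)) → (∀ ω, Z ω = quantile Q Z (U ω)) →
      ∫ ω, Z ω * Y ω ∂Q = ∫ u in (0:ℝ)..1, quantile Q Z u * quantile Q Y u) := by
  obtain ⟨M, hM⟩ := hYb
  have hΩ : Nonempty Ω := by
    by_contra h
    rw [not_nonempty_iff] at h
    have h1 : (Q univ) = 1 := measure_univ
    rw [univ_eq_empty_iff.mpr h] at h1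
    simp at h1
  have hM0 : 0 ≤ M := le_trans (abs_nonneg _) (hM (Classical.choice hΩ))
  have hYlb : ∀ ω, -M ≤ Y ω := fun ω => (abs_le.mp (hM ω)).1
  have hYub : ∀ ω, Y ω ≤ M := fun ω => (abs_le.mp (hM ω)).2
  set lam := volume.restrict (Ioo (0:ℝ) 1) with hlam
  have hqZm : AEMeasurable (quantile Q Z) lam := HL.aemeasurable_quantile hZm hZpos
  have hqYm : AEMeasurable (quantile Q Y) lam := HL.aemeasurable_quantile hYm hYlb
  -- interval integral is the Ioo set integral
  have hII : ∫ u in (0:ℝ)..1, quantile Q Z u * quantile Q Y u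
      = ∫ u in Ioo (0:ℝ) 1, quantile Q Z u * quantile Q Y u := by
    rw [intervalIntegral.integral_of_le zero_le_one, integral_Ioc_eq_integral_Ioo]
  constructor
  · -- the inequality
    set Y' : Ω → ℝ := fun ω => Y ω + M with hY'
    have hY'm : Measurable Y' := hYm.add_const M
    have hY'0 : ∀ ω, 0 ≤ Y' ω := fun ω => by have := hYlb ω; simp [hY']; linarith
    have hY'b : ∀ ω, Y' ω ≤ M + M := fun ω => by have := hYub ω; simp [hY']; linarith
    have hcore := HL.core_ineq hZm hY'm hZpos hY'0 hY'b hZint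
    -- LHS expansion
    have hZY : Integrable (fun ω => Y ω * Z ω) Q :=
      hZint.bdd_mul (c := M) hYm.aestronglyMeasurable
        (Filter.Eventually.of_forall fun ω => by rw [Real.norm_eq_abs]; exact hM ω)
    have hZYc : Integrable (fun ω => Z ω * Y ω) Q :=
      hZY.congr (Filter.Eventually.of_forall (fun ω => mul_comm _ _))
    have hL : ∫ ω, Z ω * Y' ω ∂Q = (∫ ω, Z ω * Y ω ∂Q) + M * ∫ ω, Z ω ∂Q := by
      have : ∀ ω, Z ω * Y' ω = Z ω * Y ω + M * Z ω := fun ω => by simp [hY']; ring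
      rw [integral_congr_ae (Filter.Eventually.of_forall this),
        integral_add hZYc (hZint.const_mul M), integral_const_mul]
    -- RHS expansion
    have IqZ : Integrable (quantile Q Z) lam := HL.integrable_quantile hZm hZpos hZint
    have IqYZ : Integrable (fun u => quantile Q Y u * quantile Q Z u) lam := by
      apply IqZ.bdd_mul (c := M) hqYm.aestronglyMeasurable
      filter_upwards [self_mem_ae_restrict measurableSet_Ioo] with u hu
      rw [Real.norm_eq_abs, abs_le]
      exact ⟨HL.le_quantile hYm hYlb hu.1 hu.2,
        HL.quantile_le_of_le hYlb hYub hu.1 hu.2.le⟩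
    have IqZY : Integrable (fun u => quantile Q Z u * quantile Q Y u) lam :=
      IqYZ.congr (Filter.Eventually.of_forall (fun u => mul_comm _ _))
    have hshift : ∀ᵐ u ∂lam, quantile Q Z u * quantile Q Y' u
        = quantile Q Z u * quantile Q Y u + M * quantile Q Z u := by
      filter_upwards [self_mem_ae_restrict measurableSet_Ioo] with u hu
      rw [hY', HL.quantile_shift hYm hYlb M hu.1 hu.2]
      ring
    have hR : ∫ u in Ioo (0:ℝ) 1, quantile Q Z u * quantile Q Y' u
        = (∫ u in Ioo (0:ℝ) 1, quantile Q Z u * quantile Q Y u) + M * ∫ ω, Z ω ∂Q := by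
      rw [integral_congr_ae hshift, integral_add IqZY (IqZ.const_mul M),
        integral_const_mul, HL.integral_quantile_eq hZm hZpos]
    rw [hL, hR] at hcore
    rw [hII]
    linarith
  · -- the equality case
    intro U hUm hUcdf hYU hZU
    have hmap : Q.map U = lam := by
      have h1 : Q.map U = volume.restrict (Ioc (0:ℝ) 1) := by
        haveI : IsFiniteMeasure (volume.restrict (Ioc (0:ℝ) 1)) := by
          constructor
          rw [Measure.restrict_apply_univ, Real.volume_Ioc]
          simp
        apply Measure.ext_of_Iic
        intro t
        rw [Measure.map_apply hUm measurableSet_Iic,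
          show U ⁻¹' Iic t = {ω | U ω ≤ t} from rfl,
          Measure.restrict_apply' measurableSet_Ioc]
        rcases lt_or_ge t 0 with ht | ht
        · have h2 : Q {ω | U ω ≤ t} ≤ Q {ω | U ω ≤ 0} :=
            measure_mono (fun ω (h : U ω ≤ t) => h.trans ht.le)
          rw [hUcdf 0 ⟨le_refl _, zero_le_one⟩] at h2
          simp only [ENNReal.ofReal_zero, nonpos_iff_eq_zero] at h2
          rw [h2]
          have : Iic t ∩ Ioc (0:ℝ) 1 = ∅ := by
            ext x; simp only [mem_inter_iff, mem_Iic, mem_Ioc, mem_empty_iff_false, iff_false]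
            rintro ⟨h1', h2', _⟩; linarith
          rw [this]; simp
        · rcases le_or_gt t 1 with ht1 | ht1
          · rw [hUcdf t ⟨ht, ht1⟩]
            have : Iic t ∩ Ioc (0:ℝ) 1 = Ioc 0 t := by
              ext x; simp only [mem_inter_iff, mem_Iic, mem_Ioc]
              constructor
              · rintro ⟨h1', h2', h3'⟩; exact ⟨h2', h1'⟩
              · rintro ⟨h1', h2'⟩; exact ⟨h2', h1', h2'.trans ht1⟩
            rw [this, Real.volume_Ioc]; simp
          · have h2 : Q {ω | U ω ≤ 1} ≤ Q {ω | U ω ≤ t} :=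
              measure_mono (fun ω (h : U ω ≤ 1) => h.trans ht1.le)
            rw [hUcdf 1 ⟨zero_le_one, le_refl _⟩] at h2
            have h3 : Q {ω | U ω ≤ t} ≤ 1 := prob_le_one
            have h4 : Q {ω | U ω ≤ t} = 1 := le_antisymm h3 (by simpa using h2)
            rw [h4]
            have : Iic t ∩ Ioc (0:ℝ) 1 = Ioc 0 1 := by
              apply inter_eq_right.mpr
              intro x hx; exact hx.2.trans ht1.le
            rw [this, Real.volume_Ioc]; simp
      rw [h1, hlam, Measure.restrict_congr_set Ioo_ae_eq_Ioc.symm]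
    have hint : ∫ ω, Z ω * Y ω ∂Q
        = ∫ ω, (fun x => quantile Q Z x * quantile Q Y x) (U ω) ∂Q := by
      apply integral_congr_ae
      apply Filter.Eventually.of_forall
      intro ω
      simp only
      rw [← hYU ω, ← hZU ω]
    have hsm : AEStronglyMeasurable (fun x => quantile Q Z x * quantile Q Y x) (Q.map U) := by
      rw [hmap]
      exact (hqZm.mul hqYm).aestronglyMeasurable
    have hmi := integral_map (φ := U) (f := fun x => quantile Q Z x * quantile Q Y x)
      hUm.aemeasurable hsm
    rw [hint, ← hmi, hmap, hII]
end
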